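/- arXiv:2203.15645 — 4 statements merged into one kernel-verified Lean document; each statement's English description precedes it below -/
import Mathlib

section
/- Let r ≥ 2 and s ≥ 1, and let p_1,…,p_s and p'_1,…,p'_s be two tuples of pairwise distinct points of ℙ^r(ℂ). Then there exist δ, δ' ≥ 1, homogeneous polynomials F_0,…,F_r ∈ ℂ[x_0,…,x_r] of degree δ, homogeneous polynomials G_0,…,G_r of degree δ', and a nonzero homogeneous polynomial Φ of degree δ·δ' − 1 with G_i(F_0,…,F_r) = Φ·x_i for i = 0,…,r, such that for every k ∈ {1,…,s} and every nonzero representative v ∈ ℂ^{r+1} of p_k one has Φ(v) ≠ 0 and the vector (F_0(v),…,F_r(v)) is a nonzero representative of p'_k. (Any two reduced sets of s points in ℙ^r are Cremona equivalent by a transformation which is an isomorphism in a neighborhood of the first set.) -/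
open MvPolynomial

noncomputable section CremonaAux


def Moves (r s : ℕ) (p p' : Fin s → Projectivization ℂ (Fin (r + 1) → ℂ)) : Prop :=
  ∃ (δ δ' : ℕ), 1 ≤ δ ∧ 1 ≤ δ' ∧
    ∃ (F G : Fin (r + 1) → MvPolynomial (Fin (r + 1)) ℂ)
      (Φ : MvPolynomial (Fin (r + 1)) ℂ),
      (∀ i, (F i).IsHomogeneous δ) ∧
      (∀ i, (G i).IsHomogeneous δ') ∧
      Φ ≠ 0 ∧ Φ.IsHomogeneous (δ * δ' - 1) ∧
      (∀ i, MvPolynomial.aeval F (G i) = Φ * MvPolynomial.X i) ∧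
      (∀ (k : Fin s) (v : Fin (r + 1) → ℂ) (hv : v ≠ 0),
        Projectivization.mk ℂ v hv = p k →
          MvPolynomial.eval v Φ ≠ 0 ∧
          ∃ h : (fun i => MvPolynomial.eval v (F i)) ≠ 0,
            Projectivization.mk ℂ (fun i => MvPolynomial.eval v (F i)) h = p' k)


lemma eval_aeval' {n : ℕ} (x : Fin n → ℂ) (F : Fin n → MvPolynomial (Fin n) ℂ)
    (g : MvPolynomial (Fin n) ℂ) :
    eval x (aeval F g) = eval (fun j => eval x (F j)) g := by
  rw [aeval_def, algebraMap_eq, ← MvPolynomial.eval_assoc]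
  rfl

lemma IsHomogeneous.eval_smul' {n d : ℕ} {φ : MvPolynomial (Fin n) ℂ}
    (hφ : φ.IsHomogeneous d) (c : ℂ) (x : Fin n → ℂ) :
    eval (c • x) φ = c ^ d * eval x φ := by
  conv_lhs => rw [φ.as_sum]
  conv_rhs => rw [φ.as_sum]
  rw [map_sum, map_sum, Finset.mul_sum]
  refine Finset.sum_congr rfl fun u hu => ?_
  rw [eval_monomial, eval_monomial]
  have hdeg : ∑ j ∈ u.support, u j = d := by
    have := hφ (mem_support_iff.mp hu)
    simpa [Finsupp.weight_apply, Finsupp.sum] using this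
  rw [Finsupp.prod, Finsupp.prod]
  have : ∏ j ∈ u.support, (c • x) j ^ u j
      = (∏ j ∈ u.support, c ^ u j) * ∏ j ∈ u.support, x j ^ u j := by
    rw [← Finset.prod_mul_distrib]
    refine Finset.prod_congr rfl fun j _ => ?_
    simp [mul_pow]
  rw [this, Finset.prod_pow_eq_pow_sum, hdeg]
  ring

lemma deg_arith {a b c d : ℕ} (hac : 1 ≤ a * c) (hbd : 1 ≤ b * d) :
    a * (b * d - 1) * c + (a * c - 1) = a * b * (c * d) - 1 := by
  obtain ⟨e, he⟩ := Nat.exists_eq_add_of_le hbd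
  have h1 : b * d - 1 = e := by omega
  rw [h1]
  have k1 : a * e * c = a * c * e := by ring
  have k2 : a * b * (c * d) = a * c * (b * d) := by ring
  rw [k1, k2]
  have k3 : a * c * (b * d) = a * c * e + a * c := by rw [he]; ring
  omega

lemma Moves.trans {r s : ℕ} (hs : 1 ≤ s) {p q p' : Fin s → Projectivization ℂ (Fin (r+1) → ℂ)}
    (h1 : Moves r s p q) (h2 : Moves r s q p') : Moves r s p p' := by
  obtain ⟨δ1, δ'1, hδ1, hδ'1, F, G, Φ, hF, hG, hΦ0, hΦh, hid, hpt⟩ := h1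
  obtain ⟨δ2, δ'2, hδ2, hδ'2, F', G', Φ', hF', hG', hΦ'0, hΦ'h, hid', hpt'⟩ := h2
  -- a base point where Φ'' doesn't vanish
  set k0 : Fin s := ⟨0, hs⟩
  refine ⟨δ1 * δ2, δ'1 * δ'2, Nat.one_le_iff_ne_zero.2 (by positivity), Nat.one_le_iff_ne_zero.2 (by positivity),
    fun i => aeval F (F' i), fun i => aeval G' (G i), (aeval F Φ') ^ δ'1 * Φ, ?_, ?_, ?_, ?_, ?_, ?_⟩
  · exact fun i => (hF' i).aeval F hF
  · intro i
    have := (hG i).aeval G' hG'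
    rwa [mul_comm] at this
  · -- Φ'' ≠ 0
    obtain ⟨hΦv, hFv, hmkq⟩ := hpt k0 (p k0).rep (p k0).rep_nonzero (Projectivization.mk_rep _)
    obtain ⟨hΦ'Fv, -⟩ := hpt' k0 _ hFv hmkq
    intro h0
    have : eval (p k0).rep ((aeval F Φ') ^ δ'1 * Φ) = 0 := by rw [h0]; simp
    rw [map_mul, map_pow, eval_aeval'] at this
    exact (mul_ne_zero (pow_ne_zero _ hΦ'Fv) hΦv) this
  · -- homogeneity of Φ''
    have h := (((hΦ'h.aeval F hF).pow δ'1).mul hΦh)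
    have e : δ1 * (δ2 * δ'2 - 1) * δ'1 + (δ1 * δ'1 - 1) = δ1 * δ2 * (δ'1 * δ'2) - 1 :=
      deg_arith (Nat.one_le_iff_ne_zero.2 (by positivity)) (Nat.one_le_iff_ne_zero.2 (by positivity))
    rwa [e] at h
  · -- the composition identity
    intro i
    apply MvPolynomial.funext
    intro x
    set y : Fin (r+1) → ℂ := fun j => eval x (F j) with hy
    set z : Fin (r+1) → ℂ := fun j => eval y (F' j) with hz
    have hxz : (fun j => eval x (aeval F (F' j))) = z := by
      funext j; rw [eval_aeval']
    have step1 : eval x (aeval (fun i => aeval F (F' i)) (aeval G' (G i)))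
        = eval (fun j => eval z (G' j)) (G i) := by
      rw [eval_aeval', hxz, eval_aeval']
    have step2 : (fun j => eval z (G' j)) = (eval y Φ') • y := by
      funext j
      have : eval y (aeval F' (G' j)) = eval z (G' j) := eval_aeval' _ _ _
      rw [← this, hid' j]
      simp [mul_comm]
    have step3 : eval ((eval y Φ') • y) (G i) = (eval y Φ') ^ δ'1 * eval y (G i) :=
      IsHomogeneous.eval_smul' (hG i) _ _
    have step4 : eval y (G i) = eval x Φ * x i := by
      rw [← eval_aeval', hid i]; simp
    rw [step1, step2, step3, step4]
    rw [map_mul, map_mul, map_pow, eval_aeval', eval_X]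
    ring
  · -- points
    intro k v hv hmk
    obtain ⟨hΦv, hFv, hmkq⟩ := hpt k v hv hmk
    obtain ⟨hΦ'Fv, hF'Fv, hmkp'⟩ := hpt' k _ hFv hmkq
    have hvec : (fun i => eval v (aeval F (F' i)))
        = (fun i => eval (fun j => eval v (F j)) (F' i)) := by
      funext i; rw [eval_aeval']
    constructor
    · rw [map_mul, map_pow, eval_aeval']
      exact mul_ne_zero (pow_ne_zero _ hΦ'Fv) hΦv
    · rw [hvec]  -- hope this rewrites inside the ∃
      exact ⟨hF'Fv, hmkp'⟩

lemma eval_linear_poly {n : ℕ} (S : (Fin n → ℂ) →ₗ[ℂ] (Fin n → ℂ)) (x : Fin n → ℂ)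
    (i : Fin n) :
    eval x (∑ j, C (S (Pi.single j 1) i) * X j) = S x i := by
  have hx : S x = ∑ j, x j • S (Pi.single j 1) := by
    conv_lhs => rw [← Finset.univ_sum_single x]
    rw [map_sum]
    refine Finset.sum_congr rfl fun j _ => ?_
    rw [← map_smul]
    congr 1
    rw [← Pi.single_smul, smul_eq_mul, mul_one]
  calc eval x (∑ j, C (S (Pi.single j 1) i) * X j)
      = ∑ j, S (Pi.single j 1) i * x j := by simp
    _ = S x i := by rw [hx]; simp [Finset.sum_apply, mul_comm]

lemma moves_linear {r s : ℕ} (T : (Fin (r+1) → ℂ) ≃ₗ[ℂ] (Fin (r+1) → ℂ))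
    {p p' : Fin s → Projectivization ℂ (Fin (r+1) → ℂ)}
    (hpt : ∀ k, ∃ (v : Fin (r+1) → ℂ) (hv : v ≠ 0) (hTv : (T v : Fin (r+1) → ℂ) ≠ 0),
      Projectivization.mk ℂ v hv = p k ∧ Projectivization.mk ℂ (T v) hTv = p' k) :
    Moves r s p p' := by
  classical
  set F : Fin (r+1) → MvPolynomial (Fin (r+1)) ℂ :=
    fun i => ∑ j, C ((T.toLinearMap) (Pi.single j 1) i) * X j with hFdef
  set G : Fin (r+1) → MvPolynomial (Fin (r+1)) ℂ :=
    fun i => ∑ j, C ((T.symm.toLinearMap) (Pi.single j 1) i) * X j with hGdef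
  have evalF : ∀ (x : Fin (r+1) → ℂ), (fun i => eval x (F i)) = T x := by
    intro x; funext i
    rw [hFdef]
    exact eval_linear_poly T.toLinearMap x i
  have evalG : ∀ (x : Fin (r+1) → ℂ) i, eval x (G i) = T.symm x i := by
    intro x i
    rw [hGdef]
    exact eval_linear_poly T.symm.toLinearMap x i
  refine ⟨1, 1, le_refl 1, le_refl 1, F, G, 1, ?_, ?_, one_ne_zero, ?_, ?_, ?_⟩
  · exact fun i => IsHomogeneous.sum _ _ _ fun j _ => (isHomogeneous_X _ _).C_mul _
  · exact fun i => IsHomogeneous.sum _ _ _ fun j _ => (isHomogeneous_X _ _).C_mul _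
  · simpa using isHomogeneous_one (Fin (r+1)) ℂ
  · intro i
    apply MvPolynomial.funext
    intro x
    rw [eval_aeval']
    have := evalF x
    rw [this]
    rw [evalG]
    simp
  · intro k v hv hmk
    obtain ⟨w, hw, hTw, hmkw, hmkw'⟩ := hpt k
    rw [← hmkw] at hmk
    obtain ⟨u, hu⟩ := (Projectivization.mk_eq_mk_iff ℂ v w hv hw).1 hmk
    refine ⟨by simp, ?_⟩
    rw [evalF v]
    have hTv : (T v : Fin (r+1) → ℂ) = (u : ℂ) • T w := by
      rw [← hu, Units.smul_def, map_smul]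
    refine ⟨?_, ?_⟩
    · rw [hTv]
      exact smul_ne_zero (Units.ne_zero u) hTw
    · rw [← hmkw', Projectivization.mk_eq_mk_iff]
      exact ⟨u, by rw [hTv, Units.smul_def]⟩

lemma moves_shear {r s : ℕ} (c : Fin (r+1)) (hc : c ≠ 0) (h : Fin (r+1) → Polynomial ℂ)
    (N : ℕ) (hN : ∀ j, (h j).natDegree ≤ N) (h0 : h 0 = 0) (hcc : h c = 0)
    {p p' : Fin s → Projectivization ℂ (Fin (r+1) → ℂ)}
    (hpt : ∀ k, ∃ (a : Fin (r+1) → ℂ) (ha : a ≠ 0)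
      (hwa : (fun j => a j + (h j).eval (a c)) ≠ 0),
      a 0 = 1 ∧ Projectivization.mk ℂ a ha = p k ∧
        Projectivization.mk ℂ (fun j => a j + (h j).eval (a c)) hwa = p' k) :
    Moves r s p p' := by
  classical
  set H : Fin (r+1) → MvPolynomial (Fin (r+1)) ℂ :=
    fun j => ∑ m ∈ Finset.range (N+2), C ((h j).coeff m) * X c ^ m * X 0 ^ (N+1-m) with hHdef
  set F : Fin (r+1) → MvPolynomial (Fin (r+1)) ℂ := fun j => X j * X 0 ^ N + H j with hFdef
  set G : Fin (r+1) → MvPolynomial (Fin (r+1)) ℂ := fun j => X j * X 0 ^ N - H j with hGdef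
  have evalH : ∀ (j) (z : Fin (r+1) → ℂ),
      eval z (H j) = ∑ m ∈ Finset.range (N+2),
        (h j).coeff m * (z c)^m * (z 0)^(N+1-m) := by
    intro j z; rw [hHdef]; simp
  have evalF : ∀ (j) (z : Fin (r+1) → ℂ),
      eval z (F j) = z j * (z 0)^N + eval z (H j) := by
    intro j z; rw [hFdef]; simp
  have evalG : ∀ (j) (z : Fin (r+1) → ℂ),
      eval z (G j) = z j * (z 0)^N - eval z (H j) := by
    intro j z; rw [hGdef]; simp
  have evalH_scaled : ∀ (j : Fin (r+1)) (U t : ℂ),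
      (∑ m ∈ Finset.range (N+2), (h j).coeff m * (U*t)^m * U^(N+1-m))
        = U^(N+1) * (h j).eval t := by
    intro j U t
    have hdeg : (h j).natDegree < N+2 := by have := hN j; omega
    rw [Polynomial.eval_eq_sum_range' hdeg t, Finset.mul_sum]
    refine Finset.sum_congr rfl fun m hm => ?_
    have hm' : m < N+2 := Finset.mem_range.mp hm
    have hUU : U^m * U^(N+1-m) = U^(N+1) := by
      rw [← pow_add]; congr 1; omega
    calc (h j).coeff m * (U*t)^m * U^(N+1-m)
        = (U^m * U^(N+1-m)) * ((h j).coeff m * t^m) := by rw [mul_pow]; ring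
      _ = U^(N+1) * ((h j).coeff m * t^m) := by rw [hUU]
  -- the two distinguished coordinates of the image polynomials
  have Hzero : ∀ j, h j = 0 → ∀ z, eval z (H j) = 0 := by
    intro j hj z
    rw [evalH]
    simp [hj]
  refine ⟨N+1, N+1, by omega, by omega, F, G, X 0 ^ ((N+1)*(N+1)-1), ?_, ?_, ?_, ?_, ?_, ?_⟩
  · -- F homogeneous
    intro j
    rw [hFdef]
    refine IsHomogeneous.add ?_ ?_
    · have := (isHomogeneous_X ℂ j).mul (isHomogeneous_X_pow (0 : Fin (r+1)) N)
      rwa [show 1 + N = N+1 by omega] at this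
    · refine IsHomogeneous.sum _ _ _ fun m hm => ?_
      have hm' : m < N+2 := Finset.mem_range.mp hm
      have h2 := (isHomogeneous_C_mul_X_pow ((h j).coeff m) c m).mul
        (isHomogeneous_X_pow (0 : Fin (r+1)) (N+1-m))
      rwa [show m + (N+1-m) = N+1 by omega] at h2
  · -- G homogeneous
    intro j
    rw [hGdef]
    refine IsHomogeneous.sub ?_ ?_
    · have := (isHomogeneous_X ℂ j).mul (isHomogeneous_X_pow (0 : Fin (r+1)) N)
      rwa [show 1 + N = N+1 by omega] at this
    · refine IsHomogeneous.sum _ _ _ fun m hm => ?_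
      have hm' : m < N+2 := Finset.mem_range.mp hm
      have h2 := (isHomogeneous_C_mul_X_pow ((h j).coeff m) c m).mul
        (isHomogeneous_X_pow (0 : Fin (r+1)) (N+1-m))
      rwa [show m + (N+1-m) = N+1 by omega] at h2
  · exact pow_ne_zero _ (MvPolynomial.X_ne_zero _)
  · exact isHomogeneous_X_pow (0 : Fin (r+1)) _
  · -- the identity
    intro i
    apply MvPolynomial.funext
    intro x
    rw [eval_aeval']
    set y : Fin (r+1) → ℂ := fun j => eval x (F j) with hy
    have hy0 : y 0 = x 0 ^ (N+1) := by
      simp only [hy]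
      rw [evalF, Hzero 0 h0]
      rw [add_zero, ← pow_succ']
    have hyc : y c = x c * x 0 ^ N := by
      simp only [hy]
      rw [evalF, Hzero c hcc, add_zero]
    have hyi : y i = x i * x 0 ^ N + eval x (H i) := by
      simp only [hy]; exact evalF i x
    rw [evalG, evalH i y, hyc, hy0, hyi]
    have comp : ∀ m ∈ Finset.range (N+2),
        (h i).coeff m * (x c * x 0 ^ N)^m * (x 0 ^ (N+1))^(N+1-m)
          = x 0 ^ ((N+1)*N) * ((h i).coeff m * (x c)^m * (x 0)^(N+1-m)) := by
      intro m hm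
      have hm' : m < N+2 := Finset.mem_range.mp hm
      have hd : m + (N+1-m) = N+1 := by omega
      have e : x 0 ^ (N*m) * x 0 ^ ((N+1)*(N+1-m)) = x 0 ^ ((N+1)*N) * x 0 ^ (N+1-m) := by
        rw [← pow_add, ← pow_add]
        congr 1
        have : N*m + (N+1)*(N+1-m) = N*(m + (N+1-m)) + (N+1-m) := by ring
        rw [this, hd]; ring
      calc (h i).coeff m * (x c * x 0 ^ N)^m * (x 0 ^ (N+1))^(N+1-m)
          = (x 0 ^ (N*m) * x 0 ^ ((N+1)*(N+1-m))) * ((h i).coeff m * (x c)^m) := by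
            rw [mul_pow, ← pow_mul, ← pow_mul]; ring
        _ = (x 0 ^ ((N+1)*N) * x 0 ^ (N+1-m)) * ((h i).coeff m * (x c)^m) := by rw [e]
        _ = x 0 ^ ((N+1)*N) * ((h i).coeff m * (x c)^m * (x 0)^(N+1-m)) := by ring
    rw [Finset.sum_congr rfl comp, ← Finset.mul_sum, ← evalH i x]
    rw [eval_mul, eval_pow, eval_X, eval_X, ← pow_mul]
    rw [show (N+1)*(N+1) - 1 = (N+1)*N + N by
      have : (N+1)*(N+1) = N + (N+1)*N + 1 := by ring
      omega]
    rw [pow_add]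
    ring
  · -- points
    intro k v hv hmk
    obtain ⟨a, ha, hwa, ha0, hmka, hmkw⟩ := hpt k
    rw [← hmka] at hmk
    obtain ⟨u, hu⟩ := (Projectivization.mk_eq_mk_iff ℂ v a hv ha).1 hmk
    have hva : v = (u : ℂ) • a := by rw [← hu, Units.smul_def]
    have hv0 : v 0 = (u : ℂ) := by rw [hva]; simp [ha0]
    have hvc : v c = (u : ℂ) * a c := by rw [hva]; simp
    have hEv : ∀ j, eval v (H j) = (u:ℂ)^(N+1) * (h j).eval (a c) := by
      intro j
      rw [evalH, hvc, hv0]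
      exact evalH_scaled j _ _
    have hFv : (fun j => eval v (F j))
        = ((u:ℂ)^(N+1)) • (fun j => a j + (h j).eval (a c)) := by
      funext j
      have hvj : v j = (u:ℂ) * a j := by rw [hva]; simp
      rw [evalF, hEv, hv0, hvj, Pi.smul_apply, smul_eq_mul]
      ring
    constructor
    · rw [eval_pow, eval_X, hv0]
      exact pow_ne_zero _ (Units.ne_zero u)
    · rw [hFv]
      refine ⟨smul_ne_zero (pow_ne_zero _ (Units.ne_zero u)) hwa, ?_⟩
      rw [← hmkw, Projectivization.mk_eq_mk_iff]
      exact ⟨u^(N+1), by rw [Units.smul_def, Units.val_pow_eq_pow_val]⟩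

lemma sum_single_mul {n : ℕ} (l : Fin n) (v : Fin n → ℂ) :
    ∑ j, (Pi.single l 1 : Fin n → ℂ) j * v j = v l := by
  rw [Finset.sum_eq_single l]
  · simp
  · intro j _ hj
    simp [Pi.single_apply, hj]
  · simp

lemma exists_dual {n : ℕ} (S : Finset (Fin n → ℂ)) (hS : ∀ v ∈ S, v ≠ 0) :
    ∃ w : Fin n → ℂ, ∀ v ∈ S, (∑ j, w j * v j) ≠ 0 := by
  classical
  induction S using Finset.induction_on with
  | empty => exact ⟨0, by simp⟩
  | @insert a S' hnotmem ih =>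
    obtain ⟨w, hw⟩ := ih (fun v hv => hS v (Finset.mem_insert_of_mem hv))
    have haa : a ≠ 0 := hS a (Finset.mem_insert_self a S')
    obtain ⟨i, hi⟩ := Function.ne_iff.mp haa
    simp only [Pi.zero_apply] at hi
    set P : Polynomial ℂ := ∏ v ∈ insert a S',
      (Polynomial.C (∑ j, w j * v j) + Polynomial.C (v i) * Polynomial.X) with hP
    have hP0 : P ≠ 0 := by
      rw [hP]
      apply Finset.prod_ne_zero_iff.mpr
      intro v hv
      rcases Finset.mem_insert.mp hv with rfl | hvS
      · intro hzero
        have h2 := congrArg (fun q => Polynomial.coeff q 1) hzero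
        simp at h2
        exact hi h2
      · intro hzero
        have h1 := congrArg (fun q => Polynomial.coeff q 0) hzero
        simp at h1
        exact hw v hvS h1
    obtain ⟨z, hz⟩ := ((Polynomial.finite_setOf_isRoot hP0).infinite_compl).nonempty
    have hz' : Polynomial.eval z P ≠ 0 := hz
    rw [hP, Polynomial.eval_prod] at hz'
    refine ⟨w + z • (Pi.single i 1 : Fin n → ℂ), ?_⟩
    intro v hv
    have hfac := Finset.prod_ne_zero_iff.mp hz' v hv
    simp only [Polynomial.eval_add, Polynomial.eval_mul, Polynomial.eval_C,
      Polynomial.eval_X] at hfac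
    have : ∑ j, (w + z • (Pi.single i 1 : Fin n → ℂ)) j * v j
        = (∑ j, w j * v j) + v i * z := by
      simp only [Pi.add_apply, Pi.smul_apply, smul_eq_mul, add_mul, Finset.sum_add_distrib]
      congr 1
      rw [show v i * z = z * ∑ j, (Pi.single i 1 : Fin n → ℂ) j * v j by rw [sum_single_mul]; ring,
        Finset.mul_sum]
      refine Finset.sum_congr rfl fun j _ => by ring
    rw [this]
    exact hfac

lemma exists_equiv_rows {n : ℕ} (w0 w1 : Fin n → ℂ) (i0 i1 : Fin n) (hne : i0 ≠ i1)
    (hli : LinearIndependent ℂ ![w0, w1]) :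
    ∃ T : (Fin n → ℂ) ≃ₗ[ℂ] (Fin n → ℂ),
      (∀ v, T v i0 = ∑ j, w0 j * v j) ∧ (∀ v, T v i1 = ∑ j, w1 j * v j) := by
  classical
  have hset := (linearIndepOn_id_range_iff hli.injective).mpr hli
  have hr01 : (Set.range ![w0, w1]) = {w0, w1} := by
    ext x
    simp [Set.range, Fin.exists_fin_two]
    tauto
  set ext := hset.extend (Set.subset_univ _) with hext
  set b : Module.Basis ext ℂ (Fin n → ℂ) := Module.Basis.extend hset with hb
  have hmem0 : w0 ∈ ext := hset.subset_extend _ ⟨0, rfl⟩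
  have hmem1 : w1 ∈ ext := hset.subset_extend _ ⟨1, rfl⟩
  haveI : Fintype ext := FiniteDimensional.fintypeBasisIndex b
  have hcard : Fintype.card ext = n := by
    have h1 := Module.finrank_eq_card_basis b
    rw [Module.finrank_pi, Fintype.card_fin] at h1
    omega
  set e : ext ≃ Fin n := Fintype.equivFinOfCardEq hcard with he
  set x0 : ext := ⟨w0, hmem0⟩
  set x1 : ext := ⟨w1, hmem1⟩
  have hw01 : w0 ≠ w1 := by
    intro hh
    have := hli.injective (show ![w0,w1] 0 = ![w0,w1] 1 by simpa using hh)
    simp at this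
  have hx01 : x0 ≠ x1 := fun hh => hw01 (congrArg Subtype.val hh)
  set σ1 := Equiv.swap (e x0) i0 with hσ1
  set t := σ1 (e x1) with ht
  have hti0 : t ≠ i0 := by
    rw [ht, hσ1]
    intro hh
    have : σ1 (e x0) = i0 := by rw [hσ1]; exact Equiv.swap_apply_left _ _
    have := σ1.injective (hh.trans this.symm)
    exact hx01 (e.injective this.symm)
  set σ2 := Equiv.swap t i1 with hσ2
  set efin : ext ≃ Fin n := (e.trans σ1).trans σ2 with hefin
  have hefin0 : efin x0 = i0 := by
    rw [hefin]
    simp only [Equiv.trans_apply]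
    rw [hσ1, Equiv.swap_apply_left, hσ2, Equiv.swap_apply_of_ne_of_ne (Ne.symm hti0) hne]
  have hefin1 : efin x1 = i1 := by
    rw [hefin]
    simp only [Equiv.trans_apply]
    rw [← ht, hσ2, Equiv.swap_apply_left]
  set b2 : Module.Basis (Fin n) ℂ (Fin n → ℂ) := b.reindex efin with hb2
  have hb20 : b2 i0 = w0 := by
    rw [hb2, Module.Basis.reindex_apply, ← hefin0, Equiv.symm_apply_apply, hb]
    exact Module.Basis.extend_apply_self _ _
  have hb21 : b2 i1 = w1 := by
    rw [hb2, Module.Basis.reindex_apply, ← hefin1, Equiv.symm_apply_apply, hb]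
    exact Module.Basis.extend_apply_self _ _
  set M : Matrix (Fin n) (Fin n) ℂ := Matrix.of (fun i j => b2 i j) with hM
  have hmv : ∀ (v : Fin n → ℂ) (i : Fin n), M.mulVecLin v i = ∑ j, b2 i j * v j := by
    intro v i
    rfl
  have hinj : Function.Injective M.mulVecLin := by
    rw [injective_iff_map_eq_zero]  -- for linear maps: f x = 0 → x = 0
    intro v hv
    funext l
    have hl : ∀ i, ∑ j, b2 i j * v j = 0 := by
      intro i
      rw [← hmv v i, hv]
      rfl
    have hrep := b2.sum_repr (Pi.single l 1 : Fin n → ℂ)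
    have hvl : v l = ∑ j, (Pi.single l 1 : Fin n → ℂ) j * v j := (sum_single_mul l v).symm
    rw [Pi.zero_apply, hvl, ← hrep]
    simp only [Finset.sum_apply, Pi.smul_apply, smul_eq_mul, Finset.sum_mul]
    rw [Finset.sum_comm]
    apply Finset.sum_eq_zero
    intro i _
    calc ∑ j, (b2.repr (Pi.single l 1 : Fin n → ℂ)) i * b2 i j * v j
        = (b2.repr (Pi.single l 1 : Fin n → ℂ)) i * ∑ j, b2 i j * v j := by
          rw [Finset.mul_sum]
          exact Finset.sum_congr rfl fun j _ => by ring
      _ = 0 := by rw [hl i, mul_zero]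
  refine ⟨LinearEquiv.ofInjectiveEndo M.mulVecLin hinj, ?_, ?_⟩
  · intro v
    have : (LinearEquiv.ofInjectiveEndo M.mulVecLin hinj) v = M.mulVecLin v := rfl
    rw [this, hmv, hb20]
  · intro v
    have : (LinearEquiv.ofInjectiveEndo M.mulVecLin hinj) v = M.mulVecLin v := rfl
    rw [this, hmv, hb21]

/-- Any two reduced sets of `s` points in `ℙ^r` (`r ≥ 2`) are Cremona equivalent by a
transformation which is an isomorphism in a neighborhood of the first set. -/
theorem points_cremona_equivalent (r s : ℕ) (hr : 2 ≤ r) (hs : 1 ≤ s)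
    (p p' : Fin s → Projectivization ℂ (Fin (r + 1) → ℂ))
    (hp : Function.Injective p) (hp' : Function.Injective p') :
    ∃ (δ δ' : ℕ), 1 ≤ δ ∧ 1 ≤ δ' ∧
    ∃ (F G : Fin (r + 1) → MvPolynomial (Fin (r + 1)) ℂ)
      (Φ : MvPolynomial (Fin (r + 1)) ℂ),
      (∀ i, (F i).IsHomogeneous δ) ∧
      (∀ i, (G i).IsHomogeneous δ') ∧
      Φ ≠ 0 ∧ Φ.IsHomogeneous (δ * δ' - 1) ∧
      (∀ i, MvPolynomial.aeval F (G i) = Φ * MvPolynomial.X i) ∧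
      (∀ (k : Fin s) (v : Fin (r + 1) → ℂ) (hv : v ≠ 0),
        Projectivization.mk ℂ v hv = p k →
          MvPolynomial.eval v Φ ≠ 0 ∧
          ∃ h : (fun i => MvPolynomial.eval v (F i)) ≠ 0,
            Projectivization.mk ℂ (fun i => MvPolynomial.eval v (F i)) h = p' k) := by
  show Moves r s p p'
  classical
  have h1r : 1 < r + 1 := by omega
  have h2r : 2 < r + 1 := by omega
  set i1 : Fin (r+1) := ⟨1, h1r⟩ with hi1
  set i2 : Fin (r+1) := ⟨2, h2r⟩ with hi2
  have hi10 : i1 ≠ 0 := by simp [hi1, Fin.ext_iff]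
  have hi20 : i2 ≠ 0 := by simp [hi2, Fin.ext_iff]
  have hi12 : i1 ≠ i2 := by simp [hi1, hi2, Fin.ext_iff]
  have h0i1 : (0 : Fin (r+1)) ≠ i1 := Ne.symm hi10
  -- some helpers
  have vec_ne_zero : ∀ x : Fin (r+1) → ℂ, x 0 = 1 → x ≠ 0 := by
    intro x hx h
    rw [h] at hx
    simpa using hx
  have dot_sub_smul : ∀ (w x y : Fin (r+1) → ℂ) (α β : ℂ),
      ∑ l, w l * (α • x - β • y) l
        = α * (∑ l, w l * x l) - β * (∑ l, w l * y l) := by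
    intro w x y α β
    rw [Finset.mul_sum, Finset.mul_sum, ← Finset.sum_sub_distrib]
    refine Finset.sum_congr rfl fun l _ => ?_
    simp only [Pi.sub_apply, Pi.smul_apply, smul_eq_mul]
    ring
  have sum_mul_single : ∀ (u : Fin (r+1) → ℂ) (jj : Fin (r+1)) (aa : ℂ),
      ∑ l, u l * (Pi.single jj aa : Fin (r+1) → ℂ) l = u jj * aa := by
    intro u jj aa
    rw [Finset.sum_eq_single jj]
    · simp
    · intro l _ hl
      simp [Pi.single_apply, hl]  -- single jj aa l = 0 when l ≠ jj
    · simp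
  -- Step 1: the functional w0 not vanishing on any of the points
  set S0 : Finset (Fin (r+1) → ℂ) :=
    (Finset.univ.image fun k => (p k).rep) ∪ (Finset.univ.image fun k => (p' k).rep) with hS0
  obtain ⟨w0, hw0⟩ := exists_dual S0 (by
    intro v hv
    rw [hS0, Finset.mem_union] at hv
    rcases hv with hv | hv <;>
      · obtain ⟨k, -, rfl⟩ := Finset.mem_image.mp hv
        exact Projectivization.rep_nonzero _)
  set L0 : (Fin (r+1) → ℂ) → ℂ := fun x => ∑ j, w0 j * x j with hL0
  have hw0p : ∀ k, L0 ((p k).rep) ≠ 0 := fun k =>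
    hw0 _ (Finset.mem_union_left _ (Finset.mem_image.mpr ⟨k, Finset.mem_univ k, rfl⟩))
  have hw0p' : ∀ k, L0 ((p' k).rep) ≠ 0 := fun k =>
    hw0 _ (Finset.mem_union_right _ (Finset.mem_image.mpr ⟨k, Finset.mem_univ k, rfl⟩))
  -- Step 2: a nonzero kernel vector z0 of L0
  have hw0ne : w0 ≠ 0 := by
    intro h
    apply hw0p ⟨0, hs⟩
    rw [hL0, h]
    simp
  obtain ⟨iw, hiw⟩ := Function.ne_iff.mp hw0ne
  simp only [Pi.zero_apply] at hiw
  set jw : Fin (r+1) := if iw = 0 then i1 else 0 with hjw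
  have hjwiw : jw ≠ iw := by
    rw [hjw]
    split
    · rename_i hh
      rw [hh]
      exact hi10
    · rename_i hh
      exact Ne.symm hh
  set z0 : Fin (r+1) → ℂ := (Pi.single jw (w0 iw) : Fin (r+1) → ℂ)
    - (Pi.single iw (w0 jw) : Fin (r+1) → ℂ) with hz0
  have hz0ne : z0 ≠ 0 := by
    intro h
    have := congrFun h jw
    rw [hz0] at this
    simp only [Pi.sub_apply, Pi.zero_apply] at this
    rw [Pi.single_eq_same, Pi.single_eq_of_ne hjwiw] at this
    rw [sub_zero] at this
    exact hiw this
  have hL0z0 : L0 z0 = 0 := by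
    simp only [hL0, hz0]
    have : ∀ l, w0 l * ((Pi.single jw (w0 iw) : Fin (r+1) → ℂ)
        - (Pi.single iw (w0 jw) : Fin (r+1) → ℂ)) l
        = w0 l * (Pi.single jw (w0 iw) : Fin (r+1) → ℂ) l
          - w0 l * (Pi.single iw (w0 jw) : Fin (r+1) → ℂ) l := by
      intro l; simp [Pi.sub_apply]; ring
    rw [Finset.sum_congr rfl fun l _ => this l, Finset.sum_sub_distrib,
      sum_mul_single, sum_mul_single]
    ring
  -- Step 3: the difference vectors and w1
  set Zvec : (Fin s → Projectivization ℂ (Fin (r+1) → ℂ)) → Fin s × Fin s → (Fin (r+1) → ℂ) :=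
    fun q jk => L0 ((q jk.2).rep) • (q jk.1).rep - L0 ((q jk.1).rep) • (q jk.2).rep with hZvec
  have keyZ : ∀ (q : Fin s → Projectivization ℂ (Fin (r+1) → ℂ)), Function.Injective q →
      (∀ k, L0 ((q k).rep) ≠ 0) → ∀ jk : Fin s × Fin s, jk.1 ≠ jk.2 → Zvec q jk ≠ 0 := by
    intro q hq hL jk hjk heq0
    rw [hZvec, sub_eq_zero] at heq0
    have heq : (q jk.1).rep = ((L0 ((q jk.2).rep))⁻¹ * L0 ((q jk.1).rep)) • (q jk.2).rep := by
      have := congrArg (fun z => (L0 ((q jk.2).rep))⁻¹ • z) heq0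
      simp only [smul_smul] at this
      rw [inv_mul_cancel₀ (hL jk.2), one_smul] at this
      exact this
    have hmm : Projectivization.mk ℂ ((q jk.1).rep) (Projectivization.rep_nonzero _)
        = Projectivization.mk ℂ ((q jk.2).rep) (Projectivization.rep_nonzero _) :=
      (Projectivization.mk_eq_mk_iff' ℂ _ _ _ _).2 ⟨_, heq.symm⟩
    rw [Projectivization.mk_rep, Projectivization.mk_rep] at hmm
    exact hjk (hq hmm)
  set pairs : Finset (Fin s × Fin s) := Finset.univ.filter (fun jk => jk.1 ≠ jk.2) with hpairs
  set Z : Finset (Fin (r+1) → ℂ) :=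
    insert z0 ((pairs.image (Zvec p)) ∪ (pairs.image (Zvec p'))) with hZ
  obtain ⟨w1, hw1⟩ := exists_dual Z (by
    intro v hv
    rw [hZ, Finset.mem_insert] at hv
    rcases hv with rfl | hv
    · exact hz0ne
    rw [Finset.mem_union] at hv
    rcases hv with hv | hv
    · obtain ⟨jk, hjk, rfl⟩ := Finset.mem_image.mp hv
      exact keyZ p hp hw0p jk (by simpa [hpairs] using hjk)
    · obtain ⟨jk, hjk, rfl⟩ := Finset.mem_image.mp hv
      exact keyZ p' hp' hw0p' jk (by simpa [hpairs] using hjk))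
  set L1 : (Fin (r+1) → ℂ) → ℂ := fun x => ∑ j, w1 j * x j with hL1
  have hw1z0 : L1 z0 ≠ 0 := hw1 z0 (Finset.mem_insert_self _ _)
  have hZp : ∀ j k : Fin s, j ≠ k → L1 (Zvec p (j, k)) ≠ 0 := by
    intro j k hjk
    exact hw1 _ (Finset.mem_insert_of_mem (Finset.mem_union_left _
      (Finset.mem_image.mpr ⟨(j,k), by simp [hpairs, hjk], rfl⟩)))
  have hZp' : ∀ j k : Fin s, j ≠ k → L1 (Zvec p' (j, k)) ≠ 0 := by
    intro j k hjk
    exact hw1 _ (Finset.mem_insert_of_mem (Finset.mem_union_right _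
      (Finset.mem_image.mpr ⟨(j,k), by simp [hpairs, hjk], rfl⟩)))
  -- Step 4: linear independence of w0 w1
  have hli : LinearIndependent ℂ ![w0, w1] := by
    rw [LinearIndependent.pair_iff]
    intro a b hab
    have hdot : ∀ x : Fin (r+1) → ℂ, a * (∑ j, w0 j * x j) + b * (∑ j, w1 j * x j) = 0 := by
      intro x
      have := congrFun hab
      calc a * (∑ j, w0 j * x j) + b * (∑ j, w1 j * x j)
          = ∑ j, (a • w0 + b • w1) j * x j := by
            rw [Finset.mul_sum, Finset.mul_sum, ← Finset.sum_add_distrib]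
            refine Finset.sum_congr rfl fun j _ => ?_
            simp only [Pi.add_apply, Pi.smul_apply, smul_eq_mul]
            ring
        _ = 0 := by
            rw [Finset.sum_eq_zero]
            intro j _
            rw [this j]
            simp
    have hb : b = 0 := by
      have h2 := hdot z0
      have e0 : (∑ j, w0 j * z0 j) = 0 := hL0z0
      have e1 : (∑ j, w1 j * z0 j) = L1 z0 := rfl
      rw [e0, e1, mul_zero, zero_add] at h2
      exact (mul_eq_zero.mp h2).resolve_right hw1z0
    have ha : a = 0 := by
      have h2 := hdot ((p ⟨0, hs⟩).rep)
      have e0 : (∑ j, w0 j * (p ⟨0, hs⟩).rep j) = L0 ((p ⟨0, hs⟩).rep) := rfl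
      rw [e0, hb, zero_mul, add_zero] at h2
      exact (mul_eq_zero.mp h2).resolve_right (hw0p _)
    exact ⟨ha, hb⟩
  -- Step 5: the linear change of coordinates T
  obtain ⟨T, hT0, hTi1⟩ := exists_equiv_rows w0 w1 0 i1 h0i1 hli
  -- Step 6: intermediate points and normalized representatives
  have hTne : ∀ (x : Fin (r+1) → ℂ), x ≠ 0 → (T x : Fin (r+1) → ℂ) ≠ 0 := by
    intro x hx
    simpa using (LinearEquiv.map_ne_zero_iff T).2 hx
  set q : Fin s → Projectivization ℂ (Fin (r+1) → ℂ) :=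
    fun k => Projectivization.mk ℂ (T ((p k).rep)) (hTne _ (Projectivization.rep_nonzero _)) with hq
  set q' : Fin s → Projectivization ℂ (Fin (r+1) → ℂ) :=
    fun k => Projectivization.mk ℂ (T ((p' k).rep)) (hTne _ (Projectivization.rep_nonzero _)) with hq'
  have hmove1 : Moves r s p q := by
    apply moves_linear T
    intro k
    exact ⟨(p k).rep, Projectivization.rep_nonzero _, hTne _ (Projectivization.rep_nonzero _),
      Projectivization.mk_rep _, rfl⟩
  have hmove5 : Moves r s q' p' := by
    apply moves_linear T.symm
    intro k
    refine ⟨T ((p' k).rep), hTne _ (Projectivization.rep_nonzero _), ?_, rfl, ?_⟩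
    · rw [LinearEquiv.symm_apply_apply]
      exact Projectivization.rep_nonzero _
    · refine Eq.trans ?_ (Projectivization.mk_rep (p' k))
      refine (Projectivization.mk_eq_mk_iff' ℂ _ _ _ (Projectivization.rep_nonzero _)).2 ⟨1, ?_⟩
      rw [one_smul, LinearEquiv.symm_apply_apply]
  -- normalized representatives
  set a : Fin s → Fin (r+1) → ℂ :=
    fun k => ((T ((p k).rep)) 0)⁻¹ • (T ((p k).rep) : Fin (r+1) → ℂ) with hadef
  set b : Fin s → Fin (r+1) → ℂ :=
    fun k => ((T ((p' k).rep)) 0)⁻¹ • (T ((p' k).rep) : Fin (r+1) → ℂ) with hbdef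
  have hT0p : ∀ k, (T ((p k).rep)) 0 ≠ 0 := by
    intro k; rw [hT0]; exact hw0p k
  have hT0p' : ∀ k, (T ((p' k).rep)) 0 ≠ 0 := by
    intro k; rw [hT0]; exact hw0p' k
  have ha0 : ∀ k, a k 0 = 1 := by
    intro k
    rw [hadef]
    simp only [Pi.smul_apply, smul_eq_mul]
    exact inv_mul_cancel₀ (hT0p k)
  have hb0 : ∀ k, b k 0 = 1 := by
    intro k
    rw [hbdef]
    simp only [Pi.smul_apply, smul_eq_mul]
    exact inv_mul_cancel₀ (hT0p' k)
  have hane : ∀ k, a k ≠ 0 := fun k => vec_ne_zero _ (ha0 k)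
  have hbne : ∀ k, b k ≠ 0 := fun k => vec_ne_zero _ (hb0 k)
  have hmka : ∀ k, Projectivization.mk ℂ (a k) (hane k) = q k := by
    intro k
    show _ = Projectivization.mk ℂ (T ((p k).rep)) (hTne _ (Projectivization.rep_nonzero _))
    exact (Projectivization.mk_eq_mk_iff' ℂ _ _ _ _).2 ⟨_, rfl⟩
  have hmkb : ∀ k, Projectivization.mk ℂ (b k) (hbne k) = q' k := by
    intro k
    show _ = Projectivization.mk ℂ (T ((p' k).rep)) (hTne _ (Projectivization.rep_nonzero _))
    exact (Projectivization.mk_eq_mk_iff' ℂ _ _ _ _).2 ⟨_, rfl⟩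
  -- distinctness of the i1 coordinates
  have hdista : ∀ j k : Fin s, j ≠ k → a j i1 ≠ a k i1 := by
    intro j k hjk heq
    apply hZp j k hjk
    have e1 : L1 (Zvec p (j,k))
        = L0 ((p k).rep) * L1 ((p j).rep) - L0 ((p j).rep) * L1 ((p k).rep) :=
      dot_sub_smul w1 ((p j).rep) ((p k).rep) (L0 ((p k).rep)) (L0 ((p j).rep))
    rw [e1, sub_eq_zero]
    have h0j : L0 ((p j).rep) ≠ 0 := hw0p j
    have h0k : L0 ((p k).rep) ≠ 0 := hw0p k
    have heq' : (L0 ((p j).rep))⁻¹ * L1 ((p j).rep)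
        = (L0 ((p k).rep))⁻¹ * L1 ((p k).rep) := by
      have ej : a j i1 = (L0 ((p j).rep))⁻¹ * L1 ((p j).rep) := by
        simp only [hadef, Pi.smul_apply, smul_eq_mul]
        rw [hT0, hTi1]
      have ek : a k i1 = (L0 ((p k).rep))⁻¹ * L1 ((p k).rep) := by
        simp only [hbdef, hadef, Pi.smul_apply, smul_eq_mul]
        rw [hT0, hTi1]
      rw [← ej, ← ek]; exact heq
    field_simp at heq'
    linear_combination heq'
  have hdistb : ∀ j k : Fin s, j ≠ k → b j i1 ≠ b k i1 := by
    intro j k hjk heq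
    apply hZp' j k hjk
    have e1 : L1 (Zvec p' (j,k))
        = L0 ((p' k).rep) * L1 ((p' j).rep) - L0 ((p' j).rep) * L1 ((p' k).rep) :=
      dot_sub_smul w1 ((p' j).rep) ((p' k).rep) (L0 ((p' k).rep)) (L0 ((p' j).rep))
    rw [e1, sub_eq_zero]
    have h0j : L0 ((p' j).rep) ≠ 0 := hw0p' j
    have h0k : L0 ((p' k).rep) ≠ 0 := hw0p' k
    have heq' : (L0 ((p' j).rep))⁻¹ * L1 ((p' j).rep)
        = (L0 ((p' k).rep))⁻¹ * L1 ((p' k).rep) := by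
      have ej : b j i1 = (L0 ((p' j).rep))⁻¹ * L1 ((p' j).rep) := by
        simp only [hbdef, Pi.smul_apply, smul_eq_mul]
        rw [hT0, hTi1]
      have ek : b k i1 = (L0 ((p' k).rep))⁻¹ * L1 ((p' k).rep) := by
        simp only [hbdef, Pi.smul_apply, smul_eq_mul]
        rw [hT0, hTi1]
      rw [← ej, ← ek]; exact heq
    field_simp at heq'
    linear_combination heq'
  -- helper facts about indices
  have h02 : (0 : Fin (r+1)) ≠ i2 := Ne.symm hi20
  have h01 : (0 : Fin (r+1)) ≠ i1 := Ne.symm hi10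
  -- Step 7: first shear, normalizing the i2 coordinates of the first tuple
  have hinja : Set.InjOn (fun k => a k i1) ((Finset.univ : Finset (Fin s)) : Set (Fin s)) := by
    intro x _ y _ hxy
    by_contra hne'
    exact hdista x y hne' hxy
  have hinjb : Set.InjOn (fun k => b k i1) ((Finset.univ : Finset (Fin s)) : Set (Fin s)) := by
    intro x _ y _ hxy
    by_contra hne'
    exact hdistb x y hne' hxy
  set g : Polynomial ℂ := Lagrange.interpolate Finset.univ (fun k => a k i1)
      (fun k => (k : ℂ) - a k i2) with hgdef
  have hgeval : ∀ k, g.eval (a k i1) = (k:ℂ) - a k i2 := fun k =>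
    Lagrange.eval_interpolate_at_node _ hinja (Finset.mem_univ k)
  set hA : Fin (r+1) → Polynomial ℂ := fun j => if j = i2 then g else 0 with hhA
  set cvec : Fin s → Fin (r+1) → ℂ := fun k j => a k j + (hA j).eval (a k i1) with hcvecdef
  have hcvec0 : ∀ k, cvec k 0 = 1 := by
    intro k
    simp only [hcvecdef, hhA, if_neg h02]
    simp [ha0 k]
  have hcveci2 : ∀ k, cvec k i2 = (k:ℂ) := by
    intro k
    simp only [hcvecdef, hhA, eq_self_iff_true, if_true]
    rw [hgeval]; ring
  have hcvecelse : ∀ k j, j ≠ i2 → cvec k j = a k j := by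
    intro k j hj
    simp only [hcvecdef, hhA, if_neg hj]
    simp
  set Q1 : Fin s → Projectivization ℂ (Fin (r+1) → ℂ) :=
    fun k => Projectivization.mk ℂ (cvec k) (vec_ne_zero _ (hcvec0 k)) with hQ1
  have hmove2 : Moves r s q Q1 := by
    refine moves_shear i1 hi10 hA g.natDegree ?_ ?_ ?_ ?_
    · intro j
      simp only [hhA]
      split
      · exact le_refl _
      · simp
    · simp only [hhA]
      rw [if_neg h02]
    · simp only [hhA]
      rw [if_neg hi12]
    · intro k
      refine ⟨a k, hane k, vec_ne_zero _ ?_, ha0 k, hmka k, ?_⟩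
      · show a k 0 + (hA 0).eval (a k i1) = 1
        simp only [hhA]
        rw [if_neg h02]
        simp [ha0 k]
      · rfl
  -- Step 8: the analogous shear data for the second tuple
  set g' : Polynomial ℂ := Lagrange.interpolate Finset.univ (fun k => b k i1)
      (fun k => (k : ℂ) - b k i2) with hg'def
  have hg'eval : ∀ k, g'.eval (b k i1) = (k:ℂ) - b k i2 := fun k =>
    Lagrange.eval_interpolate_at_node _ hinjb (Finset.mem_univ k)
  set hA' : Fin (r+1) → Polynomial ℂ := fun j => if j = i2 then g' else 0 with hhA'
  set dvec : Fin s → Fin (r+1) → ℂ := fun k j => b k j + (hA' j).eval (b k i1) with hdvecdef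
  have hdvec0 : ∀ k, dvec k 0 = 1 := by
    intro k
    simp only [hdvecdef, hhA']
    rw [if_neg h02]
    simp [hb0 k]
  have hdveci2 : ∀ k, dvec k i2 = (k:ℂ) := by
    intro k
    simp only [hdvecdef, hhA', eq_self_iff_true, if_true]
    rw [hg'eval]; ring
  have hdvecelse : ∀ k j, j ≠ i2 → dvec k j = b k j := by
    intro k j hj
    simp only [hdvecdef, hhA']
    rw [if_neg hj]
    simp
  have hdveci1 : ∀ k, dvec k i1 = b k i1 := fun k => hdvecelse k i1 hi12
  set Q2 : Fin s → Projectivization ℂ (Fin (r+1) → ℂ) :=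
    fun k => Projectivization.mk ℂ (dvec k) (vec_ne_zero _ (hdvec0 k)) with hQ2
  -- Step 9: the shear undoing the second normalization: Q2 → q'
  have hmove4 : Moves r s Q2 q' := by
    refine moves_shear i1 hi10 (fun j => if j = i2 then -g' else 0) g'.natDegree ?_ ?_ ?_ ?_
    · intro j
      show (if j = i2 then -g' else 0 : Polynomial ℂ).natDegree ≤ g'.natDegree
      split
      · exact le_of_eq (Polynomial.natDegree_neg _)
      · simp
    · show (if (0 : Fin (r+1)) = i2 then -g' else 0 : Polynomial ℂ) = 0
      rw [if_neg h02]
    · show (if i1 = i2 then -g' else 0 : Polynomial ℂ) = 0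
      rw [if_neg hi12]
    · intro k
      have htarget : (fun j => dvec k j
          + ((if j = i2 then -g' else 0 : Polynomial ℂ)).eval (dvec k i1)) = b k := by
        funext j
        by_cases hj : j = i2
        · subst hj
          rw [if_pos rfl, hdveci2, hdveci1, Polynomial.eval_neg, hg'eval]
          ring
        · rw [if_neg hj, hdvecelse k j hj]
          simp
      refine ⟨dvec k, vec_ne_zero _ (hdvec0 k), ?_, hdvec0 k, rfl, ?_⟩
      · rw [htarget]
        exact hbne k
      · refine Eq.trans ?_ (hmkb k)
        refine (Projectivization.mk_eq_mk_iff' ℂ _ _ _ (hbne k)).2 ⟨1, ?_⟩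
        rw [one_smul, htarget]
  -- Step 10: the middle shear Q1 → Q2
  have hinjk : Set.InjOn (fun k : Fin s => (k:ℂ))
      ((Finset.univ : Finset (Fin s)) : Set (Fin s)) := by
    intro x _ y _ hxy
    have : (x : ℕ) = (y : ℕ) := Nat.cast_injective hxy
    exact Fin.ext this
  set hB : Fin (r+1) → Polynomial ℂ := fun j => if j = 0 ∨ j = i2 then 0 else
    Lagrange.interpolate Finset.univ (fun k : Fin s => (k:ℂ))
      (fun k => dvec k j - cvec k j) with hhB
  have hmove3 : Moves r s Q1 Q2 := by
    refine moves_shear i2 hi20 hB (Finset.univ.sup (fun j => (hB j).natDegree))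
      (fun j => Finset.le_sup (f := fun j => (hB j).natDegree) (Finset.mem_univ j)) ?_ ?_ ?_
    · simp only [hhB]
      simp
    · simp only [hhB]
      simp
    · intro k
      have htarget : (fun j => cvec k j + (hB j).eval (cvec k i2)) = dvec k := by
        funext j
        by_cases hj0 : j = 0
        · subst hj0
          rw [hcvec0, hdvec0]
          simp only [hhB]
          simp
        · by_cases hj2 : j = i2
          · subst hj2
            rw [hcveci2, hdveci2]
            simp only [hhB]
            simp
          · rw [hcveci2]
            simp only [hhB]
            rw [if_neg (by tauto)]
            rw [Lagrange.eval_interpolate_at_node _ hinjk (Finset.mem_univ k)]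
            ring
      refine ⟨cvec k, vec_ne_zero _ (hcvec0 k), ?_, hcvec0 k, rfl, ?_⟩
      · rw [htarget]
        exact vec_ne_zero _ (hdvec0 k)
      · refine Eq.trans ?_ (rfl : Q2 k = Q2 k)
        show Projectivization.mk ℂ _ _ = Projectivization.mk ℂ (dvec k) (vec_ne_zero _ (hdvec0 k))
        refine (Projectivization.mk_eq_mk_iff' ℂ _ _ _ _).2 ⟨1, ?_⟩
        rw [one_smul, htarget]
  exact Moves.trans hs hmove1 (Moves.trans hs hmove2
    (Moves.trans hs hmove3 (Moves.trans hs hmove4 hmove5)))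

end CremonaAux
end

section
/- Let r ≥ 3 and let I ⊆ ℂ[x_0,…,x_r] be a homogeneous ideal. Suppose there are real numbers δ, C ≥ 0 and d_0 such that for all d ≥ d_0 the ℂ-dimension of the degree-d homogeneous component of ℂ[x_0,…,x_r]/I is at most δ·d^{r−2}/(r−2)! + C·d^{r−3}. Then there is d_1 such that for every d ≥ d_1 there exists a nonzero polynomial P ∈ I of the form P = x_0·F + G with F, G homogeneous of degrees d−1 and d respectively, neither involving x_0 (i.e., a nonzero monoid of degree d with vertex [1:0:…:0] containing the zero scheme of I). -/
open MvPolynomial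

noncomputable section

/-- The degree-`d` homogeneous component of the quotient ring `ℂ[x_0,…,x_r]/I`:
the space of degree-`d` homogeneous polynomials modulo those lying in `I`. -/
abbrev quotComponent (r d : ℕ) (I : Ideal (MvPolynomial (Fin (r + 1)) ℂ)) :=
  (MvPolynomial.homogeneousSubmodule (Fin (r + 1)) ℂ d) ⧸
    (Submodule.comap (MvPolynomial.homogeneousSubmodule (Fin (r + 1)) ℂ d).subtype
      (I.restrictScalars ℂ))

namespace MonoidAux

variable (s d : ℕ)

/-- embedding of the middle variables -/
def emb (i : Fin (s + 2)) : Fin (s + 4) := ⟨i.val + 1, by omega⟩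

def lastv : Fin (s + 4) := ⟨s + 3, by omega⟩

lemma emb_ne_lastv (i : Fin (s + 2)) : emb s i ≠ lastv s := by
  simp [emb, lastv, Fin.ext_iff]; omega

lemma emb_ne_zero (i : Fin (s + 2)) : emb s i ≠ 0 := by
  rw [Ne, Fin.ext_iff, Fin.val_zero]; exact Nat.succ_ne_zero _

lemma lastv_ne_zero : lastv s ≠ 0 := by
  simp [lastv, Fin.ext_iff]

lemma emb_injective : Function.Injective (emb s) := by
  intro i j h
  simpa [emb, Fin.ext_iff] using h

/-- the exponent finsupp attached to `f` -/
def expo (f : Fin (s + 2) → Fin (d / (s + 2) + 1)) : Fin (s + 4) →₀ ℕ :=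
  Finsupp.single (lastv s) (d - ∑ i, (f i : ℕ)) + ∑ i, Finsupp.single (emb s i) (f i : ℕ)

lemma total_le (f : Fin (s + 2) → Fin (d / (s + 2) + 1)) : ∑ i, (f i : ℕ) ≤ d := by
  have h1 : ∑ i, (f i : ℕ) ≤ ∑ _i : Fin (s + 2), d / (s + 2) :=
    Finset.sum_le_sum fun i _ => Nat.lt_succ_iff.mp (f i).isLt
  simp only [Finset.sum_const, Finset.card_univ, Fintype.card_fin, smul_eq_mul] at h1
  have h2 : (s + 2) * (d / (s + 2)) ≤ d := Nat.mul_div_le d (s + 2) |> fun h => by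
    have := Nat.div_mul_le_self d (s + 2); omega
  omega

lemma expo_apply_emb (f : Fin (s + 2) → Fin (d / (s + 2) + 1)) (i : Fin (s + 2)) :
    expo s d f (emb s i) = f i := by
  rw [expo]
  rw [Finsupp.add_apply, Finsupp.single_apply, if_neg (by exact fun h => emb_ne_lastv s i h.symm)]
  rw [Finsupp.finset_sum_apply]
  rw [Finset.sum_eq_single i]
  · simp [Finsupp.single_apply]
  · intro j _ hj
    rw [Finsupp.single_apply, if_neg (fun h => hj (emb_injective s h))]
  · simp

lemma expo_apply_zero (f : Fin (s + 2) → Fin (d / (s + 2) + 1)) :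
    expo s d f 0 = 0 := by
  rw [expo, Finsupp.add_apply, Finsupp.single_apply, if_neg (lastv_ne_zero s),
    Finsupp.finset_sum_apply]
  rw [zero_add]
  exact Finset.sum_eq_zero fun j _ => by
    rw [Finsupp.single_apply, if_neg (emb_ne_zero s j)]

lemma expo_degree (f : Fin (s + 2) → Fin (d / (s + 2) + 1)) :
    (expo s d f).degree = d := by
  have h := total_le s d f
  simp only [Finsupp.degree_eq_weight_one, expo, map_add, map_sum]
  have hs : ∀ (a : Fin (s+4)) (b : ℕ), Finsupp.weight (fun _ => 1) (Finsupp.single a b) = b := by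
    intro a b
    rw [Finsupp.weight_apply, Finsupp.sum_single_index] <;> simp
  rw [hs]
  simp only [hs]
  omega

lemma expo_injective : Function.Injective (expo s d) := by
  intro f g h
  funext i
  have := congrArg (fun m => m (emb s i)) h
  simp only [expo_apply_emb] at this
  exact Fin.ext this

lemma monomial_mem (f : Fin (s + 2) → Fin (d / (s + 2) + 1)) :
    (monomial (expo s d f) (1 : ℂ)) ∈ homogeneousSubmodule (Fin (s + 4)) ℂ d := by
  rw [mem_homogeneousSubmodule]
  exact isHomogeneous_monomial 1 (expo_degree s d f)

lemma monomial_supported (f : Fin (s + 2) → Fin (d / (s + 2) + 1)) :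
    (monomial (expo s d f) (1 : ℂ)) ∈ MvPolynomial.supported ℂ {i : Fin (s + 4) | i ≠ 0} := by
  rw [mem_supported, vars_monomial (one_ne_zero)]
  intro i hi
  simp only [Finset.coe_sort_coe, Finset.mem_coe, Finsupp.mem_support_iff] at hi
  intro h0
  exact hi (by rw [h0, expo_apply_zero])

instance : FiniteDimensional ℂ (homogeneousSubmodule (Fin (s + 4)) ℂ d) := by
  apply Submodule.finiteDimensional_of_le (S₂ := restrictTotalDegree (Fin (s + 4)) ℂ d)
  intro p hp
  rw [mem_restrictTotalDegree]
  exact ((mem_homogeneousSubmodule _ _).mp hp).totalDegree_le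

end MonoidAux

open MonoidAux

open MonoidAux in
/-- key linear-algebra step -/
lemma exists_nonzero_G (s d : ℕ) (I : Ideal (MvPolynomial (Fin (s + 4)) ℂ))
    (hcard : Module.finrank ℂ (quotComponent (s + 3) d I) < (d / (s + 2) + 1) ^ (s + 2)) :
    ∃ G : MvPolynomial (Fin (s + 4)) ℂ, G ∈ I ∧ G ≠ 0 ∧ G.IsHomogeneous d ∧
      G ∈ MvPolynomial.supported ℂ {i : Fin (s + 4) | i ≠ 0} := by
  classical
  set J := Fin (s + 2) → Fin (d / (s + 2) + 1) with hJ
  set K := (Submodule.comap (MvPolynomial.homogeneousSubmodule (Fin (s + 4)) ℂ d).subtype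
      (I.restrictScalars ℂ)) with hK
  set v : J → (MvPolynomial.homogeneousSubmodule (Fin (s + 4)) ℂ d) :=
    fun f => ⟨monomial (expo s d f) (1 : ℂ), monomial_mem s d f⟩ with hv
  set L : (J → ℂ) →ₗ[ℂ] _ := K.mkQ.comp (Fintype.linearCombination ℂ v) with hL
  have hninj : ¬ Function.Injective L := by
    intro hinj
    have := LinearMap.finrank_le_finrank_of_injective hinj
    rw [Module.finrank_fintype_fun_eq_card ℂ] at this
    have hc : Fintype.card J = (d / (s + 2) + 1) ^ (s + 2) := by
      simp [hJ, Fintype.card_fun]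
    have heq : Module.finrank ℂ (quotComponent (s + 3) d I) =
        Module.finrank ℂ ((MvPolynomial.homogeneousSubmodule (Fin (s + 4)) ℂ d) ⧸ K) := rfl
    omega
  rw [← LinearMap.ker_eq_bot] at hninj
  obtain ⟨c, hc, hc0⟩ := Submodule.ne_bot_iff _ |>.mp hninj
  obtain ⟨f₀, hf₀⟩ := Function.ne_iff.mp hc0
  set G : MvPolynomial (Fin (s + 4)) ℂ := ∑ f : J, c f • monomial (expo s d f) (1 : ℂ) with hG
  have hmemK : (⟨G, Submodule.sum_mem _ fun f _ => Submodule.smul_mem _ _ (monomial_mem s d f)⟩ :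
      (MvPolynomial.homogeneousSubmodule (Fin (s + 4)) ℂ d)) ∈ K := by
    have : L c = 0 := hc
    rw [hL, LinearMap.comp_apply, Fintype.linearCombination_apply] at this
    rw [map_sum] at this
    have h2 : K.mkQ (∑ f : J, c f • v f) = 0 := by
      rw [map_sum]; simpa using this
    have h3 : (⟨G, Submodule.sum_mem _ fun f _ => Submodule.smul_mem _ _ (monomial_mem s d f)⟩ :
        (MvPolynomial.homogeneousSubmodule (Fin (s + 4)) ℂ d)) = ∑ f : J, c f • v f := by
      apply Subtype.ext
      simp [hG, hv]
    rw [← Submodule.Quotient.mk_eq_zero, h3, ← Submodule.mkQ_apply]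
    exact h2
  refine ⟨G, ?_, ?_, ?_, ?_⟩
  · simpa [hK, Submodule.mem_comap] using hmemK
  · intro h0
    apply hf₀
    have : MvPolynomial.coeff (expo s d f₀) G = 0 := by rw [h0]; simp
    rw [hG, MvPolynomial.coeff_sum] at this
    rw [Finset.sum_eq_single f₀] at this
    · simpa [MvPolynomial.coeff_monomial] using this
    · intro f _ hf
      rw [MvPolynomial.coeff_smul, MvPolynomial.coeff_monomial,
        if_neg (fun h => hf (expo_injective s d h)), smul_zero]
    · simp
  · rw [← mem_homogeneousSubmodule]
    exact Submodule.sum_mem _ fun f _ => Submodule.smul_mem _ _ (monomial_mem s d f)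
  · exact Submodule.sum_mem (MvPolynomial.supported ℂ {i : Fin (s + 4) | i ≠ 0}).toSubmodule
      fun f _ => Submodule.smul_mem _ _ (monomial_supported s d f)


/-- If the Hilbert function of `ℂ[x_0,…,x_r]/I` grows like `δ·d^{r-2}/(r-2)! + C·d^{r-3}`,
then for every large `d` there is a nonzero monoid of degree `d` with vertex `[1:0:…:0]`
lying in `I`. -/
theorem exists_monoid_in_ideal (r : ℕ) (hr : 3 ≤ r)
    (I : Ideal (MvPolynomial (Fin (r + 1)) ℂ))
    (hI : ∀ P ∈ I, ∀ n : ℕ, MvPolynomial.homogeneousComponent n P ∈ I)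
    (δ C : ℝ) (hδ : 0 ≤ δ) (hC : 0 ≤ C)
    (d₀ : ℕ)
    (hHilb : ∀ d : ℕ, d₀ ≤ d →
      (Module.finrank ℂ (quotComponent r d I) : ℝ) ≤
        δ * (d : ℝ) ^ (r - 2) / (Nat.factorial (r - 2) : ℝ) + C * (d : ℝ) ^ (r - 3)) :
    ∃ d₁ : ℕ, ∀ d : ℕ, d₁ ≤ d →
      ∃ P ∈ I, P ≠ 0 ∧
        ∃ F G : MvPolynomial (Fin (r + 1)) ℂ,
          F.IsHomogeneous (d - 1) ∧ G.IsHomogeneous d ∧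
          F ∈ MvPolynomial.supported ℂ {i | i ≠ 0} ∧
          G ∈ MvPolynomial.supported ℂ {i | i ≠ 0} ∧
          P = MvPolynomial.X 0 * F + G := by
  obtain ⟨s, rfl⟩ : ∃ s, r = s + 3 := ⟨r - 3, by omega⟩
  set B : ℝ := (s : ℝ) + 2 with hB
  have hBpos : (0 : ℝ) < B := by positivity
  refine ⟨max d₀ (max 1 (⌈B ^ (s + 2) * (δ + C + 1)⌉₊)), fun d hd => ?_⟩
  have hd0 : d₀ ≤ d := le_trans (le_max_left _ _) hd
  have hd1 : 1 ≤ d := le_trans (le_trans (le_max_left _ _) (le_max_right _ _)) hd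
  have hdx : B ^ (s + 2) * (δ + C + 1) ≤ (d : ℝ) :=
    Nat.ceil_le.mp (le_trans (le_trans (le_max_right _ _) (le_max_right _ _)) hd)
  have hdR : (1 : ℝ) ≤ (d : ℝ) := by exact_mod_cast hd1
  have hlt : Module.finrank ℂ (quotComponent (s + 3) d I) < (d / (s + 2) + 1) ^ (s + 2) := by
    have hH := hHilb d hd0
    have e2 : s + 3 - 2 = s + 1 := by omega
    have e3 : s + 3 - 3 = s := by omega
    rw [e2, e3] at hH
    have hp1 : (1 : ℝ) ≤ (d : ℝ) ^ (s + 1) := one_le_pow₀ hdR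
    have hfac : (1 : ℝ) ≤ ((s + 1).factorial : ℝ) := by exact_mod_cast (s + 1).factorial_pos
    have step1 : δ * (d : ℝ) ^ (s + 1) / ((s + 1).factorial : ℝ) ≤ δ * (d : ℝ) ^ (s + 1) :=
      div_le_self (by positivity) hfac
    have step2 : C * (d : ℝ) ^ s ≤ C * (d : ℝ) ^ (s + 1) :=
      mul_le_mul_of_nonneg_left (pow_le_pow_right₀ hdR (by omega)) hC
    have hq : (d : ℝ) / B < ((d / (s + 2) + 1 : ℕ) : ℝ) := by
      have hnat : d < (d / (s + 2) + 1) * (s + 2) := by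
        have h1 := Nat.div_add_mod d (s + 2)
        have h2 := Nat.mod_lt d (show 0 < s + 2 by omega)
        calc d = (s + 2) * (d / (s + 2)) + d % (s + 2) := h1.symm
          _ < (s + 2) * (d / (s + 2)) + (s + 2) := by omega
          _ = (d / (s + 2) + 1) * (s + 2) := by ring
      rw [div_lt_iff₀ hBpos]
      have : (d : ℝ) < ((d / (s + 2) + 1 : ℕ) : ℝ) * ((s + 2 : ℕ) : ℝ) := by
        exact_mod_cast hnat
      rw [show B = ((s + 2 : ℕ) : ℝ) by push_cast; exact hB]
      exact this
    have step3 : (δ + C + 1) * (d : ℝ) ^ (s + 1) ≤ ((d : ℝ) / B) ^ (s + 2) := by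
      have hdiv : δ + C + 1 ≤ (d : ℝ) / B ^ (s + 2) := by
        rw [le_div_iff₀ (by positivity)]
        calc (δ + C + 1) * B ^ (s + 2) = B ^ (s + 2) * (δ + C + 1) := by ring
          _ ≤ (d : ℝ) := hdx
      calc (δ + C + 1) * (d : ℝ) ^ (s + 1)
          ≤ ((d : ℝ) / B ^ (s + 2)) * (d : ℝ) ^ (s + 1) :=
            mul_le_mul_of_nonneg_right hdiv (by positivity)
        _ = ((d : ℝ) / B) ^ (s + 2) := by
            rw [div_pow, div_mul_eq_mul_div, ← pow_succ']
    have step4 : ((d : ℝ) / B) ^ (s + 2) ≤ (((d / (s + 2) + 1 : ℕ) : ℝ)) ^ (s + 2) :=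
      pow_le_pow_left₀ (by positivity) hq.le _
    have final : (Module.finrank ℂ (quotComponent (s + 3) d I) : ℝ) <
        (((d / (s + 2) + 1) ^ (s + 2) : ℕ) : ℝ) := by
      rw [Nat.cast_pow]
      calc (Module.finrank ℂ (quotComponent (s + 3) d I) : ℝ)
          ≤ δ * (d : ℝ) ^ (s + 1) / ((s + 1).factorial : ℝ) + C * (d : ℝ) ^ s := hH
        _ ≤ δ * (d : ℝ) ^ (s + 1) + C * (d : ℝ) ^ (s + 1) := add_le_add step1 step2
        _ < (δ + C + 1) * (d : ℝ) ^ (s + 1) := by nlinarith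
        _ ≤ ((d : ℝ) / B) ^ (s + 2) := step3
        _ ≤ (((d / (s + 2) + 1 : ℕ) : ℝ)) ^ (s + 2) := step4
    exact_mod_cast final
  obtain ⟨G, hGI, hG0, hGh, hGs⟩ := exists_nonzero_G s d I hlt
  exact ⟨G, hGI, hG0, 0, G, isHomogeneous_zero _ _ _, hGh, Subalgebra.zero_mem _, hGs,
    by rw [mul_zero, zero_add]⟩

end
end

section
/- Let r ≥ 1, d ≥ 1, and let K be the fraction field of ℂ[x_0,…,x_r]. Let F_0, F be homogeneous of degree d−1 and G_0, G homogeneous of degree d, none of the four involving x_0, and suppose F_0·G ≠ F·G_0. Then there exists a ℂ-algebra automorphism σ of K with σ(x_0) = (x_0·F_0 + G_0)/(x_0·F + G) and σ(x_i) = x_i for i = 1,…,r; moreover its inverse satisfies σ^{−1}(x_0) = (G_0 − x_0·G)/(x_0·F − F_0) and σ^{−1}(x_i) = x_i for i = 1,…,r. (De Jonquières transformations are birational and their inverses are again de Jonquières transformations.) -/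
open MvPolynomial

noncomputable section

namespace DeJonq

variable {r : ℕ}

local notation "Pp" => MvPolynomial (Fin (r + 1)) ℂ

theorem aeval_eq_on_supported {S : Type*} [CommRing S] [Algebra ℂ S]
    {v u : Fin (r + 1) → S} (hvu : ∀ i : Fin (r + 1), i ≠ 0 → v i = u i)
    {q : Pp} (hq : q ∈ supported ℂ {i | i ≠ 0}) :
    aeval v q = aeval u q := by
  have hq' : q ∈ Algebra.adjoin ℂ (MvPolynomial.X '' {i : Fin (r + 1) | i ≠ 0}) := hq
  induction hq' using Algebra.adjoin_induction with
  | mem x hx => obtain ⟨i, hi, rfl⟩ := hx; simp [hvu i hi]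
  | algebraMap z => simp
  | add x y hxm hym hx hy => simp [hx hxm, hy hym]
  | mul x y hxm hym hx hy => simp [hx hxm, hy hym]

theorem algebraMap_eq_aeval (p : Pp) :
    algebraMap Pp (FractionRing Pp) p
      = aeval (fun i => algebraMap Pp (FractionRing Pp) (MvPolynomial.X i)) p := by
  have h := MvPolynomial.aeval_unique (IsScalarTower.toAlgHom ℂ Pp (FractionRing Pp))
  calc algebraMap Pp (FractionRing Pp) p
      = (IsScalarTower.toAlgHom ℂ Pp (FractionRing Pp)) p := rfl
    _ = aeval ((IsScalarTower.toAlgHom ℂ Pp (FractionRing Pp)) ∘ MvPolynomial.X) p := by rw [← h]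
    _ = _ := by rfl

theorem finSuccEquiv_rename_succ (z : MvPolynomial (Fin r) ℂ) :
    finSuccEquiv ℂ r (rename Fin.succ z) = Polynomial.C z := by
  have h : (finSuccEquiv ℂ r).toAlgHom.comp (rename Fin.succ)
      = (Polynomial.CAlgHom : MvPolynomial (Fin r) ℂ →ₐ[ℂ] _) := by
    apply MvPolynomial.algHom_ext
    intro i
    simp [finSuccEquiv_X_succ, Polynomial.CAlgHom]
  exact DFunLike.congr_fun h z

/-- `X 0 * c + e ≠ 0` when `c, e` do not involve `x₀` and are not both zero. -/
theorem X_mul_add_ne_zero {c e : Pp}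
    (hcs : c ∈ supported ℂ {i | i ≠ 0}) (hes : e ∈ supported ℂ {i | i ≠ 0})
    (h : ¬(c = 0 ∧ e = 0)) : MvPolynomial.X 0 * c + e ≠ 0 := by
  intro h0
  have hupd : ∀ i : Fin (r + 1), i ≠ 0 →
      (Function.update MvPolynomial.X 0 (0 : Pp)) i = MvPolynomial.X i := by
    intro i hi; rw [Function.update_of_ne hi]
  have he : aeval (Function.update MvPolynomial.X 0 (0 : Pp)) e = e := by
    rw [aeval_eq_on_supported hupd hes, aeval_X_left_apply]
  have hc : aeval (Function.update MvPolynomial.X 0 (0 : Pp)) c = c := by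
    rw [aeval_eq_on_supported hupd hcs, aeval_X_left_apply]
  have h1 := congrArg (aeval (Function.update MvPolynomial.X 0 (0 : Pp))) h0
  simp only [map_add, map_mul, aeval_X, Function.update_self, zero_mul, map_zero, he, hc,
    zero_add] at h1
  rw [h1, add_zero] at h0
  rcases mul_eq_zero.mp h0 with h2 | h2
  · exact absurd h2 (MvPolynomial.X_ne_zero 0)
  · exact h ⟨h2, h1⟩

private lemma cancel_aux {K : Type*} [Field K] (x n d : K) (k l : ℕ) (hd : d ≠ 0) :
    x * (n ^ k / d ^ k) * (d ^ k * d ^ l) = x * n ^ k * d ^ l := by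
  have : d ^ k ≠ 0 := pow_ne_zero _ hd
  field_simp

private lemma cancel_aux2 {K : Type*} [Field K] (x y δ ε : K) (k l : ℕ) (hε : ε ≠ 0) :
    x * y ^ k * ((δ ^ k * δ ^ l) / (ε ^ k * ε ^ l)) = x * (y ^ k * δ ^ k / ε ^ k) * (δ ^ l / ε ^ l) := by
  have h1 : ε ^ k ≠ 0 := pow_ne_zero _ hε
  have h2 : ε ^ l ≠ 0 := pow_ne_zero _ hε
  field_simp

set_option maxHeartbeats 2000000 in
set_option synthInstance.maxHeartbeats 1000000 in
/-- Master injectivity lemma for de Jonquières substitutions. -/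
theorem master (a b c e : Pp)
    (ha : a ∈ supported ℂ {i | i ≠ 0}) (hb : b ∈ supported ℂ {i | i ≠ 0})
    (hc : c ∈ supported ℂ {i | i ≠ 0}) (he : e ∈ supported ℂ {i | i ≠ 0})
    (hD : MvPolynomial.X 0 * c + e ≠ 0) (hE : MvPolynomial.X 0 * c - a ≠ 0)
    (hdet : b * c ≠ a * e) :
    Function.Injective
      (aeval (R := ℂ) (Fin.cases
        (algebraMap Pp (FractionRing Pp) (MvPolynomial.X 0 * a + b)
          / algebraMap Pp (FractionRing Pp) (MvPolynomial.X 0 * c + e))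
        (fun i => algebraMap Pp (FractionRing Pp) (MvPolynomial.X i.succ)))) := by
  set K := FractionRing Pp with hK
  set φ : Pp →+* K := algebraMap Pp K with hφdef
  have hφ : Function.Injective φ := IsFractionRing.injective Pp K
  have hφ0 : ∀ {z : Pp}, z ≠ 0 → φ z ≠ 0 := fun {z} hz h => hz (hφ (by simpa using h))
  set t : K := φ (MvPolynomial.X 0 * a + b) / φ (MvPolynomial.X 0 * c + e) with ht
  set v : Fin (r + 1) → K := Fin.cases t (fun i => φ (MvPolynomial.X i.succ)) with hv
  rw [injective_iff_map_eq_zero]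
  intro p hp
  set q : Polynomial (MvPolynomial (Fin r) ℂ) := finSuccEquiv ℂ r p with hqdef
  set m := q.natDegree with hm
  set f : MvPolynomial (Fin r) ℂ →ₐ[ℂ] K := aeval (fun i => φ (MvPolynomial.X i.succ)) with hf
  have hfr : ∀ z : MvPolynomial (Fin r) ℂ, φ (rename Fin.succ z) = f z := by
    intro z
    rw [algebraMap_eq_aeval, aeval_rename]
    rfl
  have hA : (aeval v : Pp →ₐ[ℂ] K) =
      (((Polynomial.aeval t).restrictScalars ℂ).comp
        ((Polynomial.mapAlgHom f).comp (finSuccEquiv ℂ r).toAlgHom)) := by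
    apply MvPolynomial.algHom_ext
    intro i
    refine Fin.cases ?_ (fun j => ?_) i
    · simp [hv, finSuccEquiv_X_zero]
    · simp [hv, finSuccEquiv_X_succ, hf]
  have hp1 : Polynomial.eval₂ f.toRingHom t q = 0 := by
    have h1 : aeval v p
        = Polynomial.aeval t ((finSuccEquiv ℂ r p).map f.toRingHom) := by
      have := DFunLike.congr_fun hA p
      simpa [Polynomial.mapAlgHom] using this
    rw [hp] at h1
    rw [Polynomial.coe_aeval_eq_eval, Polynomial.eval_map] at h1
    exact h1.symm
  have hsum : ∑ k ∈ Finset.range (m + 1), f.toRingHom (q.coeff k) * t ^ k = 0 := by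
    rw [← Polynomial.eval₂_eq_sum_range]; exact hp1
  have hDK : φ (MvPolynomial.X 0 * c + e) ≠ 0 := hφ0 hD
  set Q : Pp := ∑ k ∈ Finset.range (m + 1),
      rename Fin.succ (q.coeff k) * (MvPolynomial.X 0 * a + b) ^ k
        * (MvPolynomial.X 0 * c + e) ^ (m - k) with hQdef
  have hQ0 : Q = 0 := by
    apply hφ
    rw [map_zero, hQdef, map_sum]
    have h2 : (∑ k ∈ Finset.range (m + 1), f.toRingHom (q.coeff k) * t ^ k)
        * φ (MvPolynomial.X 0 * c + e) ^ m = 0 := by rw [hsum, zero_mul]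
    rw [Finset.sum_mul] at h2
    rw [← h2]
    apply Finset.sum_congr rfl
    intro k hk
    have hkm : k ≤ m := Nat.lt_succ_iff.mp (Finset.mem_range.mp hk)
    rw [map_mul, map_mul, map_pow, map_pow, hfr]
    rw [ht, div_pow]
    rw [show φ (MvPolynomial.X 0 * c + e) ^ m
          = φ (MvPolynomial.X 0 * c + e) ^ k * φ (MvPolynomial.X 0 * c + e) ^ (m - k) from by
        rw [← pow_add, Nat.add_sub_cancel' hkm]]
    rw [cancel_aux _ _ _ _ _ hDK]
    rfl
  set u : K := φ (b - MvPolynomial.X 0 * e) / φ (MvPolynomial.X 0 * c - a) with hu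
  set w : Fin (r + 1) → K := Fin.cases u (fun i => φ (MvPolynomial.X i.succ)) with hw
  have hEK : φ (MvPolynomial.X 0 * c - a) ≠ 0 := hφ0 hE
  have hΔK : φ (b * c - a * e) ≠ 0 := hφ0 (sub_ne_zero.mpr hdet)
  have hwsupp : ∀ i : Fin (r + 1), i ≠ 0 → w i = φ (MvPolynomial.X i) := by
    intro i hi
    obtain ⟨j, rfl⟩ := Fin.exists_succ_eq_of_ne_zero hi
    simp [hw]
  have hws : ∀ {z : Pp}, z ∈ supported ℂ {i | i ≠ 0} → aeval w z = φ z := by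
    intro z hz
    rw [algebraMap_eq_aeval]
    exact aeval_eq_on_supported hwsupp hz
  have hwren : ∀ z : MvPolynomial (Fin r) ℂ, aeval w (rename Fin.succ z) = f z := by
    intro z; rw [aeval_rename]; rfl
  have hw0 : w 0 = u := by simp [hw]
  have hwN : aeval w (MvPolynomial.X 0 * a + b)
      = φ (MvPolynomial.X 0 * (b * c - a * e)) / φ (MvPolynomial.X 0 * c - a) := by
    rw [map_add, map_mul, aeval_X, hws ha, hws hb, hw0, hu]
    rw [div_mul_eq_mul_div, div_add' _ _ _ hEK, div_eq_div_iff hEK hEK]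
    simp only [← map_mul, ← map_add, ← map_sub]
    exact congrArg φ (by ring)
  have hwD : aeval w (MvPolynomial.X 0 * c + e)
      = φ (b * c - a * e) / φ (MvPolynomial.X 0 * c - a) := by
    rw [map_add, map_mul, aeval_X, hws hc, hws he, hw0, hu]
    rw [div_mul_eq_mul_div, div_add' _ _ _ hEK, div_eq_div_iff hEK hEK]
    simp only [← map_mul, ← map_add, ← map_sub]
    exact congrArg φ (by ring)
  have hBQ : ∑ k ∈ Finset.range (m + 1),
      f (q.coeff k) * φ (MvPolynomial.X 0) ^ k
        * (φ (b * c - a * e) ^ m / φ (MvPolynomial.X 0 * c - a) ^ m) = 0 := by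
    have h3 := congrArg (aeval w) hQ0
    rw [hQdef, map_zero, map_sum] at h3
    rw [← h3]
    apply Finset.sum_congr rfl
    intro k hk
    have hkm : k ≤ m := Nat.lt_succ_iff.mp (Finset.mem_range.mp hk)
    rw [map_mul, map_mul, map_pow, map_pow, hwren, hwN, hwD]
    rw [div_pow, div_pow, map_mul, mul_pow]
    rw [show φ (b * c - a * e) ^ m
          = φ (b * c - a * e) ^ k * φ (b * c - a * e) ^ (m - k) from by
        rw [← pow_add, Nat.add_sub_cancel' hkm],
      show φ (MvPolynomial.X 0 * c - a) ^ m
          = φ (MvPolynomial.X 0 * c - a) ^ k * φ (MvPolynomial.X 0 * c - a) ^ (m - k) from by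
        rw [← pow_add, Nat.add_sub_cancel' hkm]]
    rw [cancel_aux2 _ _ _ _ _ _ hEK]
  rw [← Finset.sum_mul] at hBQ
  have h8 : (φ (b * c - a * e) ^ m / φ (MvPolynomial.X 0 * c - a) ^ m) ≠ 0 :=
    div_ne_zero (pow_ne_zero _ hΔK) (pow_ne_zero _ hEK)
  have h9 : ∑ k ∈ Finset.range (m + 1), f (q.coeff k) * φ (MvPolynomial.X 0) ^ k = 0 := by
    rcases mul_eq_zero.mp hBQ with h | h
    · exact h
    · exact absurd h h8
  have h11 : (∑ k ∈ Finset.range (m + 1),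
      rename Fin.succ (q.coeff k) * MvPolynomial.X 0 ^ k) = 0 := by
    apply hφ
    rw [map_zero, map_sum, ← h9]
    apply Finset.sum_congr rfl
    intro k _
    rw [map_mul, map_pow, hfr]
  have hq0 : q = 0 := by
    have h12 := congrArg (finSuccEquiv ℂ r) h11
    rw [map_sum, map_zero] at h12
    rw [Finset.sum_congr rfl (fun k _ => by
      rw [map_mul, map_pow, finSuccEquiv_rename_succ, finSuccEquiv_X_zero])] at h12
    rw [← Polynomial.as_sum_range_C_mul_X_pow q] at h12
    exact h12
  exact (AlgEquiv.injective (finSuccEquiv ℂ r)) (by rw [← hqdef, hq0, map_zero])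

end DeJonq

set_option maxHeartbeats 4000000 in
set_option synthInstance.maxHeartbeats 1000000 in
/-- De Jonquières transformations are birational, and their inverses are again de
Jonquières transformations. -/
theorem deJonquieres_birational (r d : ℕ) (hr : 1 ≤ r) (hd : 1 ≤ d)
    (F₀ F G₀ G : MvPolynomial (Fin (r + 1)) ℂ)
    (hF₀ : F₀.IsHomogeneous (d - 1)) (hF : F.IsHomogeneous (d - 1))
    (hG₀ : G₀.IsHomogeneous d) (hG : G.IsHomogeneous d)
    (hF₀s : F₀ ∈ MvPolynomial.supported ℂ {i | i ≠ 0})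
    (hFs : F ∈ MvPolynomial.supported ℂ {i | i ≠ 0})
    (hG₀s : G₀ ∈ MvPolynomial.supported ℂ {i | i ≠ 0})
    (hGs : G ∈ MvPolynomial.supported ℂ {i | i ≠ 0})
    (hnd : F₀ * G ≠ F * G₀) :
    letI K := FractionRing (MvPolynomial (Fin (r + 1)) ℂ)
    letI φ : MvPolynomial (Fin (r + 1)) ℂ →+* K := algebraMap _ _
    ∃ σ : K ≃ₐ[ℂ] K,
      σ (φ (MvPolynomial.X 0)) =
        φ (MvPolynomial.X 0 * F₀ + G₀) / φ (MvPolynomial.X 0 * F + G) ∧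
      (∀ i : Fin (r + 1), i ≠ 0 → σ (φ (MvPolynomial.X i)) = φ (MvPolynomial.X i)) ∧
      σ.symm (φ (MvPolynomial.X 0)) =
        φ (G₀ - MvPolynomial.X 0 * G) / φ (MvPolynomial.X 0 * F - F₀) ∧
      (∀ i : Fin (r + 1), i ≠ 0 → σ.symm (φ (MvPolynomial.X i)) = φ (MvPolynomial.X i)) := by
  set K := FractionRing (MvPolynomial (Fin (r + 1)) ℂ) with hKdef
  set φ : MvPolynomial (Fin (r + 1)) ℂ →+* K := algebraMap _ _ with hφdef
  have hφ : Function.Injective φ := IsFractionRing.injective _ _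
  have hφ0 : ∀ {z : MvPolynomial (Fin (r + 1)) ℂ}, z ≠ 0 → φ z ≠ 0 :=
    fun {z} hz h => hz (hφ (by simpa using h))
  -- nonvanishing of the two denominators
  have hD : MvPolynomial.X 0 * F + G ≠ 0 := by
    apply DeJonq.X_mul_add_ne_zero hFs hGs
    rintro ⟨rfl, rfl⟩
    exact hnd (by ring)
  have hE : MvPolynomial.X 0 * F - F₀ ≠ 0 := by
    have h := DeJonq.X_mul_add_ne_zero hFs (neg_mem hF₀s) (by
      rintro ⟨rfl, h0⟩
      rw [neg_eq_zero] at h0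
      rw [h0] at hnd
      exact hnd (by ring))
    simpa [sub_eq_add_neg] using h
  have hDK : φ (MvPolynomial.X 0 * F + G) ≠ 0 := hφ0 hD
  have hEK : φ (MvPolynomial.X 0 * F - F₀) ≠ 0 := hφ0 hE
  have hdetA : G₀ * F ≠ F₀ * G := fun h => hnd (by linear_combination -h)
  have hΔK : φ (G₀ * F - F₀ * G) ≠ 0 := hφ0 (sub_ne_zero.mpr hdetA)
  -- forward substitution
  set vA : Fin (r + 1) → K := Fin.cases
      (φ (MvPolynomial.X 0 * F₀ + G₀) / φ (MvPolynomial.X 0 * F + G))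
      (fun i => φ (MvPolynomial.X i.succ)) with hvA
  have hAinj : Function.Injective ⇑(aeval (R := ℂ) vA) :=
    DeJonq.master F₀ G₀ F G hF₀s hG₀s hFs hGs hD hE hdetA
  -- backward substitution
  set vB : Fin (r + 1) → K := Fin.cases
      (φ (G₀ - MvPolynomial.X 0 * G) / φ (MvPolynomial.X 0 * F - F₀))
      (fun i => φ (MvPolynomial.X i.succ)) with hvB
  have hBinj : Function.Injective ⇑(aeval (R := ℂ) vB) := by
    have hdetB : G₀ * F ≠ -G * -F₀ := fun h => hnd (by linear_combination -h)
    have hD' : MvPolynomial.X 0 * F + -F₀ ≠ 0 := by simpa [sub_eq_add_neg] using hE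
    have hE' : MvPolynomial.X 0 * F - -G ≠ 0 := by simpa [sub_neg_eq_add] using hD
    have h := DeJonq.master (-G) G₀ F (-F₀) (neg_mem hGs) hG₀s hFs (neg_mem hF₀s) hD' hE' hdetB
    have heq : (Fin.cases
        (φ (MvPolynomial.X 0 * -G + G₀) / φ (MvPolynomial.X 0 * F + -F₀))
        (fun i => φ (MvPolynomial.X i.succ)) : Fin (r + 1) → K) = vB := by
      funext i
      refine Fin.cases ?_ (fun j => ?_) i
      · simp only [hvB, Fin.cases_zero]
        rw [show MvPolynomial.X 0 * -G + G₀ = G₀ - MvPolynomial.X 0 * G from by ring,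
          show MvPolynomial.X 0 * F + -F₀ = MvPolynomial.X 0 * F - F₀ from by ring]
      · simp only [hvB, Fin.cases_succ]
    rwa [heq] at h
  -- lift to field homs
  set σA : K →ₐ[ℂ] K := IsFractionRing.liftAlgHom (g := aeval vA) hAinj with hσA
  set τA : K →ₐ[ℂ] K := IsFractionRing.liftAlgHom (g := aeval vB) hBinj with hτA
  have hσφ : ∀ p : MvPolynomial (Fin (r + 1)) ℂ, σA (φ p) = aeval vA p := by
    intro p
    rw [hσA, IsFractionRing.liftAlgHom_apply, IsFractionRing.lift_algebraMap]
    rfl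
  have hτφ : ∀ p : MvPolynomial (Fin (r + 1)) ℂ, τA (φ p) = aeval vB p := by
    intro p
    rw [hτA, IsFractionRing.liftAlgHom_apply, IsFractionRing.lift_algebraMap]
    rfl
  have hvAsupp : ∀ i : Fin (r + 1), i ≠ 0 → vA i = φ (MvPolynomial.X i) := by
    intro i hi
    obtain ⟨j, rfl⟩ := Fin.exists_succ_eq_of_ne_zero hi
    simp [hvA]
  have hvBsupp : ∀ i : Fin (r + 1), i ≠ 0 → vB i = φ (MvPolynomial.X i) := by
    intro i hi
    obtain ⟨j, rfl⟩ := Fin.exists_succ_eq_of_ne_zero hi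
    simp [hvB]
  have hvAs : ∀ {z : MvPolynomial (Fin (r + 1)) ℂ},
      z ∈ supported ℂ {i | i ≠ 0} → aeval vA z = φ z := by
    intro z hz
    rw [DeJonq.algebraMap_eq_aeval]
    exact DeJonq.aeval_eq_on_supported hvAsupp hz
  have hvBs : ∀ {z : MvPolynomial (Fin (r + 1)) ℂ},
      z ∈ supported ℂ {i | i ≠ 0} → aeval vB z = φ z := by
    intro z hz
    rw [DeJonq.algebraMap_eq_aeval]
    exact DeJonq.aeval_eq_on_supported hvBsupp hz
  have hvA0 : vA 0 = φ (MvPolynomial.X 0 * F₀ + G₀) / φ (MvPolynomial.X 0 * F + G) := by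
    simp only [hvA, Fin.cases_zero]
  have hvB0 : vB 0 = φ (G₀ - MvPolynomial.X 0 * G) / φ (MvPolynomial.X 0 * F - F₀) := by
    simp only [hvB, Fin.cases_zero]
  -- generator values
  have hσ0 : σA (φ (MvPolynomial.X 0))
      = φ (MvPolynomial.X 0 * F₀ + G₀) / φ (MvPolynomial.X 0 * F + G) := by
    rw [hσφ, aeval_X, hvA0]
  have hτ0 : τA (φ (MvPolynomial.X 0))
      = φ (G₀ - MvPolynomial.X 0 * G) / φ (MvPolynomial.X 0 * F - F₀) := by
    rw [hτφ, aeval_X, hvB0]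
  have hσi : ∀ i : Fin (r + 1), i ≠ 0 → σA (φ (MvPolynomial.X i)) = φ (MvPolynomial.X i) := by
    intro i hi
    rw [hσφ, aeval_X, hvAsupp i hi]
  have hτi : ∀ i : Fin (r + 1), i ≠ 0 → τA (φ (MvPolynomial.X i)) = φ (MvPolynomial.X i) := by
    intro i hi
    rw [hτφ, aeval_X, hvBsupp i hi]
  -- extensionality on K
  have ext2 : ∀ {ψ χ : K →ₐ[ℂ] K},
      (∀ i : Fin (r + 1), ψ (φ (MvPolynomial.X i)) = χ (φ (MvPolynomial.X i))) → ψ = χ := by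
    intro ψ χ h
    have h2 : (ψ : K →+* K).comp φ = (χ : K →+* K).comp φ := by
      apply MvPolynomial.ringHom_ext
      · intro z
        have hz : φ (MvPolynomial.C z) = algebraMap ℂ K z := by
          rw [hφdef, ← MvPolynomial.algebraMap_eq, ← IsScalarTower.algebraMap_apply]
        simp only [RingHom.comp_apply, RingHom.coe_coe, hz, AlgHom.commutes]
      · intro i
        simpa only [RingHom.comp_apply, RingHom.coe_coe] using h i
    have h3 : (ψ : K →+* K) = (χ : K →+* K) :=
      IsLocalization.ringHom_ext (nonZeroDivisors (MvPolynomial (Fin (r + 1)) ℂ)) h2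
    exact AlgHom.ext fun x => DFunLike.congr_fun h3 x
  -- the two compositions are the identity
  have hcomp1 : σA.comp τA = AlgHom.id ℂ K := by
    apply ext2
    intro i
    rcases eq_or_ne i 0 with rfl | hi
    · simp only [AlgHom.comp_apply, AlgHom.id_apply]
      rw [hτ0, map_div₀, hσφ, hσφ]
      rw [map_sub, map_mul, aeval_X, hvAs hG₀s, hvAs hGs,
        map_sub, map_mul, aeval_X, hvAs hFs, hvAs hF₀s]
      have hnum : φ G₀ - vA 0 * φ G
          = φ (MvPolynomial.X 0 * (G₀ * F - F₀ * G)) / φ (MvPolynomial.X 0 * F + G) := by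
        rw [hvA0, div_mul_eq_mul_div, sub_div' hDK, div_eq_div_iff hDK hDK]
        simp only [← map_mul, ← map_add, ← map_sub]
        exact congrArg φ (by ring)
      have hden : vA 0 * φ F - φ F₀
          = φ (G₀ * F - F₀ * G) / φ (MvPolynomial.X 0 * F + G) := by
        rw [hvA0, div_mul_eq_mul_div, div_sub' hDK, div_eq_div_iff hDK hDK]
        simp only [← map_mul, ← map_add, ← map_sub]
        exact congrArg φ (by ring)
      rw [hnum, hden, div_div_div_cancel_right₀ hDK, map_mul, mul_div_assoc, div_self hΔK,
        mul_one]
    · simp only [AlgHom.comp_apply, AlgHom.id_apply, hτi i hi, hσi i hi]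
  have hcomp2 : τA.comp σA = AlgHom.id ℂ K := by
    apply ext2
    intro i
    rcases eq_or_ne i 0 with rfl | hi
    · simp only [AlgHom.comp_apply, AlgHom.id_apply]
      rw [hσ0, map_div₀, hτφ, hτφ]
      rw [map_add, map_mul, aeval_X, hvBs hF₀s, hvBs hG₀s,
        map_add, map_mul, aeval_X, hvBs hFs, hvBs hGs]
      have hnum : vB 0 * φ F₀ + φ G₀
          = φ (MvPolynomial.X 0 * (G₀ * F - F₀ * G)) / φ (MvPolynomial.X 0 * F - F₀) := by
        rw [hvB0, div_mul_eq_mul_div, div_add' _ _ _ hEK, div_eq_div_iff hEK hEK]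
        simp only [← map_mul, ← map_add, ← map_sub]
        exact congrArg φ (by ring)
      have hden : vB 0 * φ F + φ G
          = φ (G₀ * F - F₀ * G) / φ (MvPolynomial.X 0 * F - F₀) := by
        rw [hvB0, div_mul_eq_mul_div, div_add' _ _ _ hEK, div_eq_div_iff hEK hEK]
        simp only [← map_mul, ← map_add, ← map_sub]
        exact congrArg φ (by ring)
      rw [hnum, hden, div_div_div_cancel_right₀ hEK, map_mul, mul_div_assoc, div_self hΔK,
        mul_one]
    · simp only [AlgHom.comp_apply, AlgHom.id_apply, hσi i hi, hτi i hi]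
  refine ⟨AlgEquiv.ofAlgHom σA τA hcomp1 hcomp2, ?_, ?_, ?_, ?_⟩
  · exact hσ0
  · exact hσi
  · exact hτ0
  · exact hτi

end
end

section
/- Let r ≥ 2 and d ≥ 1. Let P = x_0·F + G ∈ ℂ[x_0,…,x_r], where F and G are homogeneous of degrees d−1 and d respectively, neither involving x_0, F ≠ 0, and every common divisor of F and G is a unit (so P is an irreducible monoid with vertex [1:0:…:0]). Then there exist homogeneous polynomials H_1,…,H_r of degree d, an integer δ' ≥ 1, homogeneous polynomials G_0,…,G_r of degree δ', and a nonzero homogeneous polynomial Φ such that, setting H_0 := P, one has G_i(H_0, H_1, …, H_r) = Φ·x_i for i = 0,…,r, and moreover there exists v ∈ ℂ^{r+1} with P(v) = 0 and Φ(v) ≠ 0. (Every irreducible monoid is Cremona equivalent to a hyperplane: the Cremona transformation [H_0 : ⋯ : H_r] maps the hypersurface P = 0 into the hyperplane y_0 = 0 and is an isomorphism at a general point of it.) -/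
open MvPolynomial

lemma aeval_congr_supported {σ : Type*} {R A : Type*} [CommSemiring R] [CommSemiring A]
    [Algebra R A] {s : Set σ} {p : MvPolynomial σ R} (hp : p ∈ MvPolynomial.supported R s)
    {f g : σ → A} (h : ∀ i ∈ s, f i = g i) : aeval f p = aeval g p := by
  rw [supported_eq_range_rename, AlgHom.mem_range] at hp
  obtain ⟨q, rfl⟩ := hp
  rw [aeval_rename, aeval_rename]
  have hfg : (f ∘ (Subtype.val : s → σ)) = g ∘ Subtype.val := funext fun i => h i i.2
  rw [hfg]

lemma aeval_scale {σ : Type*} {R : Type*} [CommRing R] {p : MvPolynomial σ R} {n : ℕ}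
    (hp : p.IsHomogeneous n) (c : MvPolynomial σ R) :
    aeval (fun i => X i * c) p = c ^ n * p := by
  rw [p.as_sum, map_sum, Finset.mul_sum]
  refine Finset.sum_congr rfl fun u hu => ?_
  have hdeg : u.degree = n := by
    by_contra h
    exact mem_support_iff.mp hu (hp.coeff_eq_zero h)
  rw [aeval_monomial, monomial_eq]
  rw [Finsupp.prod, Finsupp.prod]
  have : ∏ i ∈ u.support, (X i * c) ^ u i
      = (∏ i ∈ u.support, (X i : MvPolynomial σ R) ^ u i) * c ^ u.degree := by
    rw [Finsupp.degree_apply, ← Finset.prod_pow_eq_pow_sum, ← Finset.prod_mul_distrib]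
    exact Finset.prod_congr rfl fun i _ => mul_pow _ _ _
  rw [this, hdeg, algebraMap_eq]
  ring

/-- Every irreducible monoid is Cremona equivalent to a hyperplane: there is a Cremona
transformation whose zeroth coordinate is the monoid itself (so it maps the monoid into the
hyperplane `y₀ = 0`) and which is a local isomorphism at some point of the monoid. -/
theorem irreducible_monoid_cremona_equivalent_hyperplane (r d : ℕ) (hr : 2 ≤ r) (hd : 1 ≤ d)
    (F G : MvPolynomial (Fin (r + 1)) ℂ)
    (hF : F.IsHomogeneous (d - 1)) (hG : G.IsHomogeneous d)
    (hFs : F ∈ MvPolynomial.supported ℂ {i | i ≠ 0})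
    (hGs : G ∈ MvPolynomial.supported ℂ {i | i ≠ 0})
    (hF0 : F ≠ 0)
    (hcop : ∀ D : MvPolynomial (Fin (r + 1)) ℂ, D ∣ F → D ∣ G → IsUnit D) :
    ∃ (H : Fin (r + 1) → MvPolynomial (Fin (r + 1)) ℂ),
      H 0 = MvPolynomial.X 0 * F + G ∧
      (∀ i : Fin (r + 1), i ≠ 0 → (H i).IsHomogeneous d) ∧
      ∃ (δ' : ℕ), 1 ≤ δ' ∧
      ∃ (G' : Fin (r + 1) → MvPolynomial (Fin (r + 1)) ℂ)
        (Φ : MvPolynomial (Fin (r + 1)) ℂ) (e : ℕ),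
        (∀ i, (G' i).IsHomogeneous δ') ∧
        Φ ≠ 0 ∧ Φ.IsHomogeneous e ∧
        (∀ i, MvPolynomial.aeval H (G' i) = Φ * MvPolynomial.X i) ∧
        ∃ v : Fin (r + 1) → ℂ,
          MvPolynomial.eval v (MvPolynomial.X 0 * F + G) = 0 ∧
          MvPolynomial.eval v Φ ≠ 0 := by
  set P : MvPolynomial (Fin (r + 1)) ℂ := X 0 * F + G with hP
  set H : Fin (r + 1) → MvPolynomial (Fin (r + 1)) ℂ :=
    fun i => if i = 0 then P else X i * F with hHdef
  have hd1 : d - 1 + 1 = d := Nat.succ_pred_eq_of_pos hd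
  have hXiF : ∀ i : Fin (r + 1), (X i * F).IsHomogeneous d := by
    intro i
    have := (isHomogeneous_X ℂ i).mul hF
    rwa [show 1 + (d - 1) = d by omega] at this
  -- key substitution facts
  have hagree : ∀ i ∈ {i : Fin (r + 1) | i ≠ 0}, H i = (fun j => X j * F) i := by
    intro i hi
    simp only [hHdef]
    rw [if_neg hi]
  have haF : aeval H F = F ^ d := by
    rw [aeval_congr_supported hFs hagree, aeval_scale hF, ← pow_succ, hd1]
  have haG : aeval H G = F ^ d * G := by
    rw [aeval_congr_supported hGs hagree, aeval_scale hG]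
  refine ⟨H, by simp [hHdef], ?_, d, hd, ?_⟩
  · intro i hi
    simpa only [hHdef, if_neg hi] using hXiF i
  · refine ⟨fun i => if i = 0 then X 0 * F - G else X i * F, F ^ (d + 1), (d - 1) * (d + 1),
      ?_, pow_ne_zero _ hF0, hF.pow _, ?_, ?_⟩
    · intro i
      show (if i = 0 then X 0 * F - G else X i * F).IsHomogeneous d
      by_cases hi : i = 0
      · rw [if_pos hi]
        exact (hXiF 0).sub hG
      · rw [if_neg hi]
        exact hXiF i
    · intro i
      show aeval H (if i = 0 then X 0 * F - G else X i * F) = F ^ (d + 1) * X i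
      by_cases hi : i = 0
      · rw [if_pos hi, hi]
        have h0 : aeval (R := ℂ) H (X (0 : Fin (r + 1))) = P := by simp [hHdef]
        rw [map_sub, map_mul, h0, haF, haG, hP]
        ring
      · rw [if_neg hi]
        have h0 : aeval (R := ℂ) H (X i) = X i * F := by
          simp only [aeval_X, hHdef]
          rw [if_neg hi]
        rw [map_mul, h0, haF]
        ring
    · -- a point on the monoid where Φ ≠ 0
      have hex : ∃ w : Fin (r + 1) → ℂ, eval w F ≠ 0 := by
        by_contra h
        push_neg at h
        exact hF0 (MvPolynomial.funext fun x => by simp [h x])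
      obtain ⟨w, hw⟩ := hex
      set v : Fin (r + 1) → ℂ := Function.update w 0 (-(eval w G / eval w F)) with hv
      have hvw : ∀ i ∈ {i : Fin (r + 1) | i ≠ 0}, v i = w i := by
        intro i hi
        exact Function.update_of_ne hi _ _
      have hvF : eval v F = eval w F := aeval_congr_supported hFs hvw
      have hvG : eval v G = eval w G := aeval_congr_supported hGs hvw
      refine ⟨v, ?_, ?_⟩
      · have hv0 : v 0 = -(eval w G / eval w F) := Function.update_self _ _ _
        rw [map_add, map_mul, eval_X, hv0, hvF, hvG]
        field_simp
        ring
      · rw [map_pow, hvF]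
        exact pow_ne_zero _ hw
end
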